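/- arXiv:1101.0136 — 8 statements merged into one kernel-verified Lean document; each statement's English description precedes it below -/
import Mathlib

section
/- For the Möbius automorphism M_α(ζ) = (α - ζ)/(1 - conj(α)·ζ) of the unit disc with α ∈ Δ, α ≠ 0, and for 0 < R < 1, the rational function extending z ↦ 1 - |z|² from the circle Γ = {M_α(Rζ) : |ζ| = 1} has exactly one pole inside the disc bounded by Γ, a simple pole at the Euclidean center of Γ, and exactly one zero inside that disc, a simple zero at α. -/
open Complex Metric

private lemma mem_sphere_iff_mul_conj (z w : ℂ) (r : ℝ) (hr : 0 ≤ r) :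
    z ∈ sphere w r ↔ (z - w) * (starRingEnd ℂ) (z - w) = ((r : ℂ))^2 := by
  rw [mem_sphere_iff_norm, Complex.mul_conj,
    show ((r:ℂ))^2 = ((r^2 : ℝ) : ℂ) by push_cast; ring, Complex.ofReal_inj,
    Complex.normSq_eq_norm_sq]
  constructor
  · exact fun h => by rw [h]
  · intro h
    have h2 := congrArg Real.sqrt h
    rwa [Real.sqrt_sq (norm_nonneg _), Real.sqrt_sq hr] at h2

set_option maxHeartbeats 1600000 in
/-- For `α ∈ Δ`, `α ≠ 0`, `0 < R < 1`, the circle `Γ = {M_α(Rζ) : |ζ|=1}` is a Euclidean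
circle `sphere c ρ`; the rational extension of `1-|z|²` from `Γ` has numerator
`-(conj c)(z-α)(z-1/conj α)`, with a simple zero at `α` inside the disc (the other zero
`1/conj α` lying outside the closed disc) and a simple pole at the Euclidean center `c`. -/
theorem stmt1 (α : ℂ) (hα : α ∈ ball (0:ℂ) 1) (hα0 : α ≠ 0)
    (R : ℝ) (hR0 : 0 < R) (hR1 : R < 1) :
    ∃ c : ℂ, ∃ ρ : ℝ, 0 < ρ ∧
      sphere c ρ = (fun ζ => (α - ζ) / (1 - starRingEnd ℂ α * ζ)) '' sphere (0:ℂ) R ∧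
      (∀ ζ ∈ sphere c ρ,
        (1 : ℂ) - ζ * starRingEnd ℂ ζ = 1 - ζ * (starRingEnd ℂ c + (ρ:ℂ)^2 / (ζ - c))) ∧
      (∀ z : ℂ, (z - c) * (1 - z * starRingEnd ℂ c) - z * (ρ:ℂ)^2
        = -(starRingEnd ℂ c) * (z - α) * (z - (starRingEnd ℂ α)⁻¹)) ∧
      α ∈ ball c ρ ∧
      (starRingEnd ℂ α)⁻¹ ∉ closedBall c ρ ∧
      α ≠ (starRingEnd ℂ α)⁻¹ ∧
      starRingEnd ℂ c ≠ 0 ∧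
      -(starRingEnd ℂ c) * (c - α) * (c - (starRingEnd ℂ α)⁻¹) ≠ 0 := by
  have habs : ‖α‖ < 1 := by simpa using mem_ball_zero_iff.1 hα
  have habs0 : 0 < ‖α‖ := by simpa using hα0
  set s : ℝ := Complex.normSq α with hs_def
  have hs0 : 0 < s := Complex.normSq_pos.2 hα0
  have hs1 : s < 1 := by
    rw [hs_def, Complex.normSq_eq_norm_sq]; nlinarith
  have h1s : (0:ℝ) < 1 - s := by linarith
  set D : ℝ := 1 - R^2 * s with hD_def
  have hD : 0 < D := by rw [hD_def]; nlinarith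
  have hDne : (1 - R^2*s : ℝ) ≠ 0 := by rw [← hD_def]; exact hD.ne'
  set c : ℂ := (((1 - R^2)/D : ℝ) : ℂ) * α with hc_def
  set ρ : ℝ := R * (1 - s) / D with hρ_def
  have hρ : 0 < ρ := by
    rw [hρ_def]; exact div_pos (mul_pos hR0 h1s) hD
  have hsC : ((s:ℝ) : ℂ) = α * starRingEnd ℂ α := (Complex.mul_conj α).symm
  have hb : starRingEnd ℂ α ≠ 0 := by simpa using hα0
  have hDC : ((D : ℝ) : ℂ) ≠ 0 := Complex.ofReal_ne_zero.2 hD.ne'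
  have hDC' : (1 : ℂ) - (R:ℂ)^2 * (α * starRingEnd ℂ α) ≠ 0 := by
    rw [← hsC]
    have h : ((D:ℝ) : ℂ) = 1 - (R:ℂ)^2 * ((s:ℝ):ℂ) := by rw [hD_def]; push_cast; ring
    rw [← h]; exact hDC
  have hcconj : starRingEnd ℂ c = (((1 - R^2)/D : ℝ) : ℂ) * starRingEnd ℂ α := by
    rw [hc_def, map_mul, Complex.conj_ofReal]
  have hDCC : (1:ℂ) - (R:ℂ)^2 * ((s:ℝ):ℂ) ≠ 0 := by
    exact_mod_cast Complex.ofReal_ne_zero.2 hDne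
  have h1ab : (1 : ℂ) - α * starRingEnd ℂ α ≠ 0 := by
    rw [← hsC]
    have h : ((1 - s : ℝ) : ℂ) ≠ 0 := Complex.ofReal_ne_zero.2 (by linarith)
    simpa using h
  have hRα1 : R * ‖α‖ < 1 := by nlinarith
  -- conjunct 5 : α ∈ ball c ρ
  have hfrac : (0:ℝ) < R^2 * (1-s) / D := div_pos (mul_pos (pow_pos hR0 2) h1s) hD
  have hαc : α - c = α * (((R^2 * (1 - s) / D : ℝ)) : ℂ) := by
    rw [hc_def]
    have h1 : (1 : ℝ) - (1 - R^2)/D = R^2*(1-s)/D := by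
      rw [hD_def]; field_simp; ring
    calc α - (((1 - R^2)/D : ℝ) : ℂ) * α = α * (((1 : ℝ) - (1 - R^2)/D : ℝ) : ℂ) := by
          push_cast; ring
      _ = α * (((R^2 * (1 - s) / D : ℝ)) : ℂ) := by rw [h1]
  have hαc_norm : ‖α - c‖ = ‖α‖ * (R^2 * (1-s)/D) := by
    rw [hαc, norm_mul, Complex.norm_of_nonneg hfrac.le]
  have hball : α ∈ ball c ρ := by
    rw [mem_ball_iff_norm, hαc_norm]
    have h2 : ‖α‖ * (R^2*(1-s)/D) = (‖α‖ * R) * ρ := by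
      rw [hρ_def]; ring
    rw [h2]
    calc (‖α‖ * R) * ρ < 1 * ρ := by
          apply mul_lt_mul_of_pos_right _ hρ
          rw [mul_comm]; exact hRα1
      _ = ρ := one_mul ρ
  -- conjunct 6 : (conj α)⁻¹ ∉ closedBall c ρ
  have hinv : (starRingEnd ℂ α)⁻¹ - c = (((1-s)/D : ℝ) : ℂ) / starRingEnd ℂ α := by
    rw [eq_div_iff hb, sub_mul, inv_mul_cancel₀ hb, hc_def, mul_assoc, ← hsC, hD_def]
    push_cast
    field_simp [hDCC]
    ring
  have hinv_norm : ‖(starRingEnd ℂ α)⁻¹ - c‖ = ((1-s)/D) / ‖α‖ := by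
    rw [hinv, norm_div, Complex.norm_of_nonneg (div_pos h1s hD).le, Complex.norm_conj]
  have hout : (starRingEnd ℂ α)⁻¹ ∉ closedBall c ρ := by
    rw [mem_closedBall, dist_eq_norm, hinv_norm]
    push_neg
    rw [lt_div_iff₀ habs0]
    have h3 : ρ * ‖α‖ = (R * ‖α‖) * ((1-s)/D) := by
      rw [hρ_def]; ring
    rw [h3]
    have ht : (0:ℝ) < (1-s)/D := div_pos h1s hD
    nlinarith
  -- conjunct 7
  have hne : α ≠ (starRingEnd ℂ α)⁻¹ := by
    intro h
    apply h1ab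
    have h2 : α * starRingEnd ℂ α = 1 := by nth_rewrite 1 [h]; exact inv_mul_cancel₀ hb
    rw [h2, sub_self]
  -- conjunct 8
  have hc0 : starRingEnd ℂ c ≠ 0 := by
    rw [hcconj]
    refine mul_ne_zero (Complex.ofReal_ne_zero.2 (ne_of_gt (div_pos (by nlinarith) hD))) hb
  -- conjunct 9
  have hcα : c - α ≠ 0 := by
    intro h
    have h0 : ‖α - c‖ = 0 := by rw [show α - c = -(c - α) by ring, h]; simp
    rw [hαc_norm] at h0
    have hpos : (0:ℝ) < ‖α‖ * (R^2*(1-s)/D) := mul_pos habs0 hfrac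
    linarith
  have hcinv : c - (starRingEnd ℂ α)⁻¹ ≠ 0 := by
    intro h
    have h0 : ‖(starRingEnd ℂ α)⁻¹ - c‖ = 0 := by
      rw [show (starRingEnd ℂ α)⁻¹ - c = -(c - (starRingEnd ℂ α)⁻¹) by ring, h]; simp
    rw [hinv_norm] at h0
    have hpos : (0:ℝ) < ((1-s)/D) / ‖α‖ := div_pos (div_pos h1s hD) habs0
    linarith
  -- the key Hermitian-form identity
  have key : ∀ u v : ℂ, (α - u) * (starRingEnd ℂ α - v)
      - (R:ℂ)^2 * (1 - starRingEnd ℂ α * u) * (1 - α * v)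
      = ((D:ℝ):ℂ) * ((u - c) * (v - starRingEnd ℂ c) - (ρ:ℂ)^2) := by
    intro u v
    rw [hcconj, hc_def, hρ_def, hD_def]
    push_cast
    rw [hsC]
    have hD2 : (1:ℂ) - α * starRingEnd ℂ α * (R:ℂ)^2 ≠ 0 := by convert hDC' using 1; ring
    field_simp [hD2]
    ring
  -- conjunct 4 : quadratic identity
  have hquad : ∀ z : ℂ, (z - c) * (1 - z * starRingEnd ℂ c) - z * (ρ:ℂ)^2
      = -(starRingEnd ℂ c) * (z - α) * (z - (starRingEnd ℂ α)⁻¹) := by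
    intro z
    rw [hcconj, hc_def, hρ_def, hD_def]
    push_cast
    rw [hsC]
    have hD2 : (1:ℂ) - (R:ℂ)^2 * α * starRingEnd ℂ α ≠ 0 := by convert hDC' using 1; ring
    field_simp [hD2]
    ring
  -- conjunct 2 : the circle
  have hcirc : sphere c ρ = (fun ζ => (α - ζ) / (1 - starRingEnd ℂ α * ζ)) '' sphere (0:ℂ) R := by
    ext w
    constructor
    · intro hw
      have hwc : (w - c) * starRingEnd ℂ (w - c) = ((ρ:ℂ))^2 :=
        (mem_sphere_iff_mul_conj w c ρ hρ.le).1 hw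
      have hsph : (w - c) * (starRingEnd ℂ w - starRingEnd ℂ c) = ((ρ:ℂ))^2 := by
        rw [← hwc, map_sub]
      have hbw : (1 : ℂ) - starRingEnd ℂ α * w ≠ 0 := by
        intro h
        apply hout
        have hw1 : starRingEnd ℂ α * w = 1 := by linear_combination -h
        have hww : w = (starRingEnd ℂ α)⁻¹ := eq_inv_of_mul_eq_one_left (by
          rw [mul_comm]; exact hw1)
        rw [← hww]
        exact sphere_subset_closedBall hw
      have hbw' : (1 : ℂ) - α * starRingEnd ℂ w ≠ 0 := by
        intro h
        apply hbw
        have h2 := congrArg (starRingEnd ℂ) h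
        simpa [map_sub, map_mul, Complex.conj_conj] using h2
      refine ⟨(α - w) / (1 - starRingEnd ℂ α * w), ?_, ?_⟩
      · -- |ζ| = R
        rw [mem_sphere_iff_mul_conj _ _ R hR0.le]
        simp only [sub_zero, map_div₀, map_sub, map_mul, map_one, Complex.conj_conj]
        rw [div_mul_div_comm, div_eq_iff (mul_ne_zero hbw hbw')]
        linear_combination key w (starRingEnd ℂ w) + ((D:ℝ):ℂ) * hsph
      · -- M (M w) = w
        show (α - (α - w) / (1 - starRingEnd ℂ α * w))
            / (1 - starRingEnd ℂ α * ((α - w) / (1 - starRingEnd ℂ α * w))) = w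
        have hnum : α - (α - w) / (1 - starRingEnd ℂ α * w)
            = w * (1 - α * starRingEnd ℂ α) / (1 - starRingEnd ℂ α * w) := by
          rw [eq_div_iff hbw, sub_mul, div_mul_cancel₀ _ hbw]
          ring
        have hden : 1 - starRingEnd ℂ α * ((α - w) / (1 - starRingEnd ℂ α * w))
            = (1 - α * starRingEnd ℂ α) / (1 - starRingEnd ℂ α * w) := by
          field_simp
          ring
        rw [hnum, hden, div_div_div_cancel_right₀]
        · exact mul_div_cancel_right₀ w h1ab
        · exact hbw
    · rintro ⟨ζ, hζ, rfl⟩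
      have hζR : ζ * starRingEnd ℂ ζ = ((R:ℂ))^2 := by
        have h := (mem_sphere_iff_mul_conj ζ 0 R hR0.le).1 hζ
        simpa using h
      have hζ0 : ζ ≠ 0 := by
        intro h
        apply pow_ne_zero 2 (Complex.ofReal_ne_zero.2 hR0.ne' : ((R:ℝ):ℂ) ≠ 0)
        rw [← hζR, h, zero_mul]
      have hconjζ : starRingEnd ℂ ζ = (R:ℂ)^2 / ζ := by
        rw [← hζR]; field_simp
      have hbζ : (1 : ℂ) - starRingEnd ℂ α * ζ ≠ 0 := by
        intro h
        have h1 : ‖(starRingEnd ℂ α * ζ)‖ = 1 := by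
          rw [show starRingEnd ℂ α * ζ = 1 from by linear_combination -h]; simp
        rw [norm_mul, Complex.norm_conj] at h1
        have hζa : ‖ζ‖ = R := by
          simpa using mem_sphere_zero_iff_norm.1 hζ
        rw [hζa] at h1
        nlinarith
      have hbζ' : (1 : ℂ) - α * starRingEnd ℂ ζ ≠ 0 := by
        intro h
        apply hbζ
        have h2 := congrArg (starRingEnd ℂ) h
        simpa [map_sub, map_mul, Complex.conj_conj] using h2
      have hv : (1 : ℂ) - α * ((R:ℂ)^2 / ζ) ≠ 0 := by
        rw [← hconjζ]; exact hbζ'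
      have e1 : (1:ℂ) - α * ((R:ℂ)^2 / ζ) = (ζ - α * (R:ℂ)^2) / ζ := by
        field_simp
      have hv2 : ζ - α * (R:ℂ)^2 ≠ 0 := by
        intro h
        apply hv
        rw [e1, h, zero_div]
      simp only
      rw [mem_sphere_iff_mul_conj _ _ ρ hρ.le]
      simp only [map_sub]
      have h4 : ((D:ℝ):ℂ) * (((α - ζ) / (1 - starRingEnd ℂ α * ζ) - c)
          * (starRingEnd ℂ ((α - ζ) / (1 - starRingEnd ℂ α * ζ)) - starRingEnd ℂ c)
          - (ρ:ℂ)^2) = 0 := by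
        rw [← key]
        simp only [map_div₀, map_sub, map_mul, map_one, Complex.conj_conj]
        rw [hconjζ]
        have hbζ2 : (1:ℂ) - ζ * starRingEnd ℂ α ≠ 0 := by rwa [mul_comm]
        field_simp [hv2, hbζ2]
        ring
      have h5 := (mul_eq_zero.1 h4).resolve_left hDC
      linear_combination h5
  -- conjunct 3
  have hext : ∀ ζ ∈ sphere c ρ,
      (1 : ℂ) - ζ * starRingEnd ℂ ζ = 1 - ζ * (starRingEnd ℂ c + (ρ:ℂ)^2 / (ζ - c)) := by
    intro ζ hζ
    have hwc : (ζ - c) * starRingEnd ℂ (ζ - c) = ((ρ:ℂ))^2 :=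
      (mem_sphere_iff_mul_conj ζ c ρ hρ.le).1 hζ
    have hwc0 : ζ - c ≠ 0 := by
      intro h
      apply pow_ne_zero 2 (Complex.ofReal_ne_zero.2 hρ.ne' : ((ρ:ℝ):ℂ) ≠ 0)
      rw [← hwc, h, zero_mul]
    have hcz : starRingEnd ℂ ζ = starRingEnd ℂ c + (ρ:ℂ)^2 / (ζ - c) := by
      rw [← hwc]
      field_simp
      rw [map_sub]; ring
    rw [hcz]
  exact ⟨c, ρ, hρ, hcirc, hext, hquad, hball, hout, hne, hc0,
    mul_ne_zero (mul_ne_zero (neg_ne_zero.2 hc0) hcα) hcinv⟩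
end

section
/- Let α, β ∈ Δ with α ≠ β, and let f(z) = (z-α)(z-β)/(1-|z|²) for z ∈ Δ. Then for every circle Γ contained in Δ with hyperbolic center α or hyperbolic center β, the restriction of f to Γ extends holomorphically through the disc bounded by Γ. -/
open Complex Metric

set_option maxHeartbeats 1000000 in
lemma key_identity (a a' b w u : ℂ)
    (h1 : 1 - a'*w ≠ 0) (h2 : 1 - a*u ≠ 0)
    (hz1 : 1 - ((a-w)/(1-a'*w)) * ((a'-u)/(1-a*u)) ≠ 0)
    (hz2 : 1 - a' * ((a-w)/(1-a'*w)) ≠ 0)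
    (hr : w*u - 1 ≠ 0) :
    ((a-w)/(1-a'*w) - a) * ((a-w)/(1-a'*w) - b) / (1 - ((a-w)/(1-a'*w)) * ((a'-u)/(1-a*u)))
      = ((a-w)/(1-a'*w) - b) * (a*(1-w*u) - ((a-w)/(1-a'*w))*(1-w*u*(a*a')))
        / ((w*u-1)*(1 - a' * ((a-w)/(1-a'*w)))) := by
  have hd2 : (w*u-1)*(1 - a' * ((a-w)/(1-a'*w))) ≠ 0 := mul_ne_zero hr hz2
  rw [div_eq_div_iff hz1 hd2]
  have h1' : 1 - w*a' ≠ 0 := by rwa [mul_comm]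
  field_simp
  ring

lemma one_sub_ne_zero_of_norm_lt (x : ℂ) (h : ‖x‖ < 1) : 1 - x ≠ 0 := by
  intro h0
  rw [sub_eq_zero] at h0
  rw [← h0] at h
  simp at h

lemma normSq_mobius_diff (a w : ℂ) :
    ((normSq (1 - starRingEnd ℂ a * w) : ℂ)) - (normSq (a - w) : ℂ)
      = ((1 : ℂ) - normSq a) * (1 - normSq w) := by
  rw [← Complex.mul_conj, ← Complex.mul_conj, ← Complex.mul_conj, ← Complex.mul_conj]
  simp only [map_sub, map_mul, map_one, Complex.conj_conj]
  ring

lemma mobius_norm_lt (a w : ℂ) (ha : ‖a‖ < 1) (hw : ‖w‖ < 1) :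
    ‖(a - w) / (1 - starRingEnd ℂ a * w)‖ < 1 := by
  have key : normSq (1 - starRingEnd ℂ a * w) - normSq (a - w)
      = (1 - normSq a) * (1 - normSq w) := by exact_mod_cast normSq_mobius_diff a w
  have ha' : normSq a < 1 := by
    have : ‖a‖ ^ 2 < 1 := by nlinarith [norm_nonneg a]
    simpa [Complex.sq_norm] using this
  have hw' : normSq w < 1 := by
    have : ‖w‖ ^ 2 < 1 := by nlinarith [norm_nonneg w]
    simpa [Complex.sq_norm] using this
  have hlt : normSq (a - w) < normSq (1 - starRingEnd ℂ a * w) := by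
    nlinarith [normSq_nonneg (a - w)]
  have hden : (0:ℝ) < ‖(1 - starRingEnd ℂ a * w)‖ := by
    have h2 : 0 < normSq (1 - starRingEnd ℂ a * w) := by
      nlinarith [normSq_nonneg (a - w)]
    simpa [norm_pos_iff, ← normSq_pos] using h2
  rw [norm_div, div_lt_one hden]
  have h1 : ‖a - w‖ ^ 2 < ‖1 - starRingEnd ℂ a * w‖ ^ 2 := by
    simpa [Complex.sq_norm] using hlt
  nlinarith [norm_nonneg (a - w), norm_nonneg (1 - starRingEnd ℂ a * w)]

lemma closedBall_subset_of_sphere (c : ℂ) (ρ : ℝ) (hρ : 0 < ρ)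
    (h : sphere c ρ ⊆ ball (0:ℂ) 1) : closedBall c ρ ⊆ ball (0:ℂ) 1 := by
  intro z hz
  rw [mem_closedBall, dist_eq_norm] at hz
  set u : ℂ := z - c with hu
  set t : ℝ := ‖u‖ with ht
  have ht0 : 0 ≤ t := norm_nonneg _
  rcases eq_or_lt_of_le ht0 with h0 | h0
  · -- u = 0, z = c
    have hu0 : u = 0 := by rw [← norm_eq_zero]; exact h0.symm ▸ rfl
    have hzc : z = c := by rw [← sub_eq_zero]; exact hu0
    have hp : c + ρ ∈ sphere c ρ := by
      simp [mem_sphere_iff_norm, abs_of_pos hρ]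
    have hm : c - ρ ∈ sphere c ρ := by
      simp [mem_sphere_iff_norm, abs_of_pos hρ]
    have := (convex_ball (0:ℂ) 1) (h hp) (h hm) (by norm_num : (0:ℝ) ≤ 1/2)
      (by norm_num : (0:ℝ) ≤ 1/2) (by norm_num)
    have hc : (1/2 : ℝ) • (c + (ρ:ℂ)) + (1/2 : ℝ) • (c - (ρ:ℂ)) = z := by
      rw [hzc]
      simp [Complex.real_smul]
      ring
    rwa [hc] at this
  · -- 0 < t
    set v : ℂ := ((ρ / t : ℝ) : ℂ) * u with hv
    have hvn : ‖v‖ = ρ := by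
      rw [hv, norm_mul, Complex.norm_real, Real.norm_eq_abs,
        abs_of_pos (div_pos hρ h0), ← ht, div_mul_cancel₀ _ (ne_of_gt h0)]
    have hp : c + v ∈ sphere c ρ := by simp [mem_sphere_iff_norm, hvn]
    have hm : c - v ∈ sphere c ρ := by
      simp only [mem_sphere_iff_norm, sub_sub_cancel_left, norm_neg]
      exact hvn
    have ha : (0:ℝ) ≤ (ρ + t) / (2*ρ) := by positivity
    have hb : (0:ℝ) ≤ (ρ - t) / (2*ρ) := by
      apply div_nonneg (by linarith) (by linarith)
    have hab : (ρ + t) / (2*ρ) + (ρ - t) / (2*ρ) = 1 := by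
      field_simp
      ring
    have := (convex_ball (0:ℂ) 1) (h hp) (h hm) ha hb hab
    have hc : ((ρ + t) / (2*ρ) : ℝ) • (c + v) + ((ρ - t) / (2*ρ) : ℝ) • (c - v) = z := by
      have hzcu : z = c + u := by rw [hu]; ring
      rw [hzcu, hv]
      simp only [Complex.real_smul]
      push_cast
      have htne : (t:ℂ) ≠ 0 := by exact_mod_cast ne_of_gt h0
      have hρne : (ρ:ℂ) ≠ 0 := by exact_mod_cast ne_of_gt hρ
      field_simp
      ring
    rwa [hc] at this

/-- For `α ≠ β` in the unit disc, `f(z) = (z-α)(z-β)/(1-|z|²)` extends holomorphically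
from every circle in `Δ` with hyperbolic center `α` or `β`. -/
theorem stmt3 (α β : ℂ) (hα : α ∈ ball (0:ℂ) 1) (hβ : β ∈ ball (0:ℂ) 1) (hne : α ≠ β)
    (f : ℂ → ℂ)
    (hf : ∀ z ∈ ball (0:ℂ) 1, f z = (z - α) * (z - β) / (1 - (‖z‖ : ℂ)^2)) :
    ∀ γ ∈ ({α, β} : Set ℂ), ∀ R : ℝ, 0 < R → R < 1 →
      ∀ c : ℂ, ∀ ρ : ℝ, 0 < ρ →
        sphere c ρ = (fun ζ => (γ - ζ) / (1 - starRingEnd ℂ γ * ζ)) '' sphere (0:ℂ) R →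
        ∃ g : ℂ → ℂ, ContinuousOn g (closedBall c ρ) ∧ DifferentiableOn ℂ g (ball c ρ) ∧
          ∀ z ∈ sphere c ρ, g z = f z := by
  intro γ hγmem R hR0 hR1 c ρ hρ hΓ
  rw [mem_ball_zero_iff] at hα hβ
  -- the other root
  obtain ⟨δ, hδ, hprod⟩ : ∃ δ : ℂ, ‖δ‖ < 1 ∧ ∀ z : ℂ, (z - α) * (z - β) = (z - γ) * (z - δ) := by
    rcases hγmem with h | h
    · exact ⟨β, hβ, fun z => by rw [h]⟩
    · simp only [Set.mem_singleton_iff] at h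
      exact ⟨α, hα, fun z => by rw [h]; ring⟩
  have hγ : ‖γ‖ < 1 := by
    rcases hγmem with h | h
    · rw [h]; exact hα
    · simp only [Set.mem_singleton_iff] at h; rw [h]; exact hβ
  have hR2 : ((R:ℂ)^2 - 1) ≠ 0 := by
    intro h
    rw [sub_eq_zero] at h
    have : (R:ℝ)^2 = 1 := by exact_mod_cast h
    nlinarith
  -- the sphere lies in the unit ball
  have hsub : sphere c ρ ⊆ ball (0:ℂ) 1 := by
    rw [hΓ]
    rintro z ⟨w, hw, rfl⟩
    rw [mem_sphere_zero_iff_norm] at hw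
    rw [mem_ball_zero_iff]
    exact mobius_norm_lt γ w hγ (by rw [hw]; exact hR1)
  have hcb : closedBall c ρ ⊆ ball (0:ℂ) 1 := closedBall_subset_of_sphere c ρ hρ hsub
  -- the extension
  refine ⟨fun z => (z-δ) * (γ*(1-(R:ℂ)^2) - z*(1-(R:ℂ)^2*(γ * starRingEnd ℂ γ)))
      / (((R:ℂ)^2-1)*(1 - starRingEnd ℂ γ * z)), ?_, ?_, ?_⟩
  · apply ContinuousOn.div
    · fun_prop
    · fun_prop
    · intro z hz
      apply mul_ne_zero hR2
      apply one_sub_ne_zero_of_norm_lt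
      have hzlt : ‖z‖ < 1 := by rw [← mem_ball_zero_iff]; exact hcb hz
      calc ‖starRingEnd ℂ γ * z‖ = ‖γ‖ * ‖z‖ := by rw [norm_mul, RCLike.norm_conj]
        _ < 1 := by nlinarith [norm_nonneg γ, norm_nonneg z]
  · apply DifferentiableOn.div
    · fun_prop
    · fun_prop
    · intro z hz
      apply mul_ne_zero hR2
      apply one_sub_ne_zero_of_norm_lt
      have hzlt : ‖z‖ < 1 := by
        rw [← mem_ball_zero_iff]; exact hcb (ball_subset_closedBall hz)
      calc ‖starRingEnd ℂ γ * z‖ = ‖γ‖ * ‖z‖ := by rw [norm_mul, RCLike.norm_conj]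
        _ < 1 := by nlinarith [norm_nonneg γ, norm_nonneg z]
  · intro z hz
    have hzball : z ∈ ball (0:ℂ) 1 := hsub hz
    have hzlt : ‖z‖ < 1 := by rwa [mem_ball_zero_iff] at hzball
    rw [hf z hzball, hprod]
    have hnorm : ((‖z‖ : ℂ))^2 = z * starRingEnd ℂ z := by
      rw [Complex.mul_conj, ← Complex.ofReal_pow]
      norm_cast
      rw [← Complex.sq_norm]
    rw [hnorm]
    -- get the Möbius parametrization
    rw [hΓ] at hz
    obtain ⟨w, hw, rfl⟩ := hz
    rw [mem_sphere_zero_iff_norm] at hw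
    set z := (γ - w) / (1 - starRingEnd ℂ γ * w) with hzdef
    have hwlt : ‖w‖ < 1 := by rw [hw]; exact hR1
    have h1 : 1 - starRingEnd ℂ γ * w ≠ 0 := by
      apply one_sub_ne_zero_of_norm_lt
      rw [norm_mul, RCLike.norm_conj]
      nlinarith [norm_nonneg γ, norm_nonneg w]
    have h2 : 1 - γ * starRingEnd ℂ w ≠ 0 := by
      apply one_sub_ne_zero_of_norm_lt
      rw [norm_mul, RCLike.norm_conj]
      nlinarith [norm_nonneg γ, norm_nonneg w]
    have hwu : w * starRingEnd ℂ w = (R:ℂ)^2 := by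
      have hns : normSq w = R^2 := by
        rw [← Complex.sq_norm, hw]
      rw [Complex.mul_conj, hns, ← Complex.ofReal_pow]
    have hconjz : starRingEnd ℂ z
        = (starRingEnd ℂ γ - starRingEnd ℂ w) / (1 - γ * starRingEnd ℂ w) := by
      rw [hzdef, map_div₀, map_sub, map_sub, map_one, map_mul, Complex.conj_conj]
    have hz1 : 1 - z * ((starRingEnd ℂ γ - starRingEnd ℂ w) / (1 - γ * starRingEnd ℂ w)) ≠ 0 := by
      rw [← hconjz, Complex.mul_conj]
      intro hcon
      rw [sub_eq_zero] at hcon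
      have : normSq z = 1 := by exact_mod_cast hcon.symm
      have : ‖z‖^2 = 1 := by rw [← this, ← Complex.sq_norm]
      nlinarith [norm_nonneg z]
    have hz2 : 1 - starRingEnd ℂ γ * z ≠ 0 := by
      apply one_sub_ne_zero_of_norm_lt
      rw [norm_mul, RCLike.norm_conj]
      nlinarith [norm_nonneg γ, norm_nonneg z]
    have hr : w * starRingEnd ℂ w - 1 ≠ 0 := by
      rw [hwu]; exact hR2
    have K := key_identity γ (starRingEnd ℂ γ) δ w (starRingEnd ℂ w) h1 h2
      (by rw [← hzdef]; exact hz1) (by rw [← hzdef]; exact hz2) hr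
    rw [← hzdef] at K
    rw [hwu] at K
    rw [hconjz]
    exact K.symm
end

section
/- Let I ⊂ ℝ be an interval, n ∈ ℕ, and let Φ : bΔ × I → ℂ be continuous such that for each t ∈ I the function ζ ↦ Φ(ζ,t) extends holomorphically through Δ \ {0} with a pole at 0 of degree ≤ n. Then the extension has the form Φ̃(ζ,t) = d_0(t)/ζ^n + ... + d_{n-1}(t)/ζ + Θ(ζ,t) for ζ ∈ closure(Δ) \ {0}, where each d_j is continuous on I, Θ is continuous on closure(Δ) × I, and ζ ↦ Θ(ζ,t) is holomorphic on Δ for each t. -/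
open Complex Metric Function Real
open scoped Classical



private lemma iter_dslope_eq (f : ℂ → ℂ) (m : ℕ) {z : ℂ} (hz : z ≠ 0) :
    (Function.swap dslope 0)^[m] f z
      = (f z - ∑ j ∈ Finset.range m, ((Function.swap dslope 0)^[j] f 0) * z ^ j) / z ^ m := by
  induction m with
  | zero => simp
  | succ m ih =>
    rw [Function.iterate_succ_apply']
    have h1 : Function.swap dslope 0 ((Function.swap dslope 0)^[m] f) z
        = ((Function.swap dslope 0)^[m] f z - (Function.swap dslope 0)^[m] f 0) / z := by
      simp [Function.swap, dslope_of_ne _ hz, slope_def_field]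
    rw [h1, ih, Finset.sum_range_succ]
    field_simp
    ring

private lemma dslope_diffOn (f : ℂ → ℂ) (p : FormalMultilinearSeries ℂ ℂ ℂ)
    (hd : DifferentiableOn ℂ f (ball (0:ℂ) 1)) (hp : HasFPowerSeriesAt f p 0) :
    DifferentiableOn ℂ (dslope f 0) (ball (0:ℂ) 1) := by
  intro z hz
  rcases eq_or_ne z 0 with rfl | h
  · exact hp.has_fpower_series_dslope_fslope.differentiableAt.differentiableWithinAt
  · exact ((differentiableAt_dslope_of_ne h).mpr
      ((hd z hz).differentiableAt (isOpen_ball.mem_nhds hz))).differentiableWithinAt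

private lemma iter_dslope_diffOn (f : ℂ → ℂ) (p : FormalMultilinearSeries ℂ ℂ ℂ)
    (hd : DifferentiableOn ℂ f (ball (0:ℂ) 1)) (hp : HasFPowerSeriesAt f p 0) (m : ℕ) :
    DifferentiableOn ℂ ((Function.swap dslope 0)^[m] f) (ball (0:ℂ) 1) := by
  induction m with
  | zero => simpa
  | succ m ih =>
    rw [Function.iterate_succ_apply']
    exact dslope_diffOn _ _ ih (hp.has_fpower_series_iterate_dslope_fslope m)

private lemma iter_dslope_coeff (f : ℂ → ℂ) (p : FormalMultilinearSeries ℂ ℂ ℂ)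
    (hp : HasFPowerSeriesAt f p 0) (m : ℕ) :
    (Function.swap dslope 0)^[m] f 0 = p.coeff m := by
  have h1 := (hp.has_fpower_series_iterate_dslope_fslope m).coeff_zero 1
  have h2 : (FormalMultilinearSeries.fslope^[m] p).coeff 0 = p.coeff m := by
    rw [FormalMultilinearSeries.coeff_iterate_fslope]; norm_num
  rw [← h2, FormalMultilinearSeries.coeff, ← h1]

private lemma tube_est (I : Set ℝ) (Φ : ℂ → ℝ → ℂ)
    (hΦ : ContinuousOn (fun p : ℂ × ℝ => Φ p.1 p.2) (sphere (0:ℂ) 1 ×ˢ I))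
    {t₀ : ℝ} (ht₀ : t₀ ∈ I) {δ : ℝ} (hδ : 0 < δ) :
    ∃ v : Set ℝ, IsOpen v ∧ t₀ ∈ v ∧ ∀ t ∈ v ∩ I, ∀ ζ ∈ sphere (0:ℂ) 1, ‖Φ ζ t - Φ ζ t₀‖ ≤ δ := by
  have hmaps : Set.MapsTo (fun p : ℂ × ℝ => (p.1, t₀)) (sphere (0:ℂ) 1 ×ˢ I)
      (sphere (0:ℂ) 1 ×ˢ I) := fun p hp => ⟨hp.1, ht₀⟩
  have hc : ContinuousOn (fun p : ℂ × ℝ => Φ p.1 p.2 - Φ p.1 t₀) (sphere (0:ℂ) 1 ×ˢ I) :=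
    hΦ.sub (hΦ.comp ((continuous_fst.prodMk continuous_const).continuousOn) hmaps)
  obtain ⟨O, hO, heq⟩ := continuousOn_iff'.mp hc (Metric.ball (0:ℂ) δ) isOpen_ball
  have hsub : sphere (0:ℂ) 1 ×ˢ ({t₀} : Set ℝ) ⊆ O := by
    rintro ⟨ζ, t⟩ ⟨hζ, ht⟩
    have ht' : t = t₀ := ht
    have hmem : ((ζ, t₀) : ℂ × ℝ) ∈ (fun p : ℂ × ℝ => Φ p.1 p.2 - Φ p.1 t₀) ⁻¹' Metric.ball (0:ℂ) δ ∩
        (sphere (0:ℂ) 1 ×ˢ I) := ⟨by simp [mem_ball_zero_iff, hδ], hζ, ht₀⟩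
    rw [heq] at hmem
    rw [ht']
    exact hmem.1
  obtain ⟨u, v, _, hv, hsu, htv, huv⟩ :=
    generalized_tube_lemma (isCompact_sphere (0:ℂ) 1) isCompact_singleton hO hsub
  refine ⟨v, hv, htv rfl, fun t ht ζ hζ => ?_⟩
  have : (ζ, t) ∈ O ∩ (sphere (0:ℂ) 1 ×ˢ I) := ⟨huv ⟨hsu hζ, ht.1⟩, hζ, ht.2⟩
  rw [← heq] at this
  have := this.1
  simp only [Set.mem_preimage, mem_ball_zero_iff] at this
  exact this.le

private lemma coeff_eq_integral (w : ℂ → ℂ) (j : ℕ) :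
    (cauchyPowerSeries w 0 1).coeff j
      = (2 * π * Complex.I : ℂ)⁻¹ * ∮ z in C(0, 1), z⁻¹ ^ j * (z⁻¹ * w z) := by
  have h := cauchyPowerSeries_apply w 0 1 j 1
  simp only [smul_eq_mul, sub_zero, one_div] at h
  rw [FormalMultilinearSeries.coeff, ← h]
  rfl

private lemma sphere_integrand_cont (w : ℂ → ℂ) (j : ℕ)
    (hw : ContinuousOn w (sphere (0:ℂ) 1)) :
    ContinuousOn (fun z : ℂ => z⁻¹ ^ j * (z⁻¹ * w z)) (sphere (0:ℂ) 1) := by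
  have hz : ∀ z ∈ sphere (0:ℂ) 1, z ≠ 0 := by
    intro z hz h0
    rw [mem_sphere_zero_iff_norm, h0] at hz
    simp at hz
  have hinv : ContinuousOn (fun z : ℂ => z⁻¹) (sphere (0:ℂ) 1) :=
    (continuousOn_id.inv₀ hz)
  exact (hinv.pow j).mul (hinv.mul hw)

private lemma coeff_diff_est (u v : ℂ → ℂ)
    (hu : ContinuousOn u (sphere (0:ℂ) 1)) (hv : ContinuousOn v (sphere (0:ℂ) 1))
    {δ : ℝ} (hles : ∀ ζ ∈ sphere (0:ℂ) 1, ‖u ζ - v ζ‖ ≤ δ) (j : ℕ) :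
    ‖(cauchyPowerSeries u 0 1).coeff j - (cauchyPowerSeries v 0 1).coeff j‖ ≤ δ := by
  have hzn : ∀ z ∈ sphere (0:ℂ) 1, ‖z‖ = 1 := fun z hz => mem_sphere_zero_iff_norm.mp hz
  have hiu := (sphere_integrand_cont u j hu).circleIntegrable zero_le_one
  have hiv := (sphere_integrand_cont v j hv).circleIntegrable zero_le_one
  rw [coeff_eq_integral, coeff_eq_integral, ← mul_sub, ← circleIntegral.integral_sub hiu hiv]
  have hbound : ∀ z ∈ sphere (0:ℂ) 1,
      ‖z⁻¹ ^ j * (z⁻¹ * u z) - z⁻¹ ^ j * (z⁻¹ * v z)‖ ≤ δ := by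
    intro z hz
    have h1 : ‖z‖ = 1 := hzn z hz
    have : z⁻¹ ^ j * (z⁻¹ * u z) - z⁻¹ ^ j * (z⁻¹ * v z) = z⁻¹ ^ j * z⁻¹ * (u z - v z) := by
      ring
    rw [this, norm_mul, norm_mul, norm_pow, norm_inv, h1]
    simp only [inv_one, one_pow, one_mul]
    exact hles z hz
  have hnint : ‖∮ z in C(0, 1), (z⁻¹ ^ j * (z⁻¹ * u z) - z⁻¹ ^ j * (z⁻¹ * v z))‖
      ≤ 2 * π * 1 * δ :=
    circleIntegral.norm_integral_le_of_norm_le_const zero_le_one hbound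
  have h2π : ‖(2 * ↑π * Complex.I : ℂ)⁻¹‖ = (2 * π)⁻¹ := by
    rw [norm_inv, norm_mul, norm_mul, Complex.norm_I, mul_one]
    norm_num [Complex.norm_real, abs_of_pos Real.pi_pos]
  calc ‖(2 * ↑π * Complex.I : ℂ)⁻¹ * ∮ z in C(0, 1), (z⁻¹ ^ j * (z⁻¹ * u z) - z⁻¹ ^ j * (z⁻¹ * v z))‖
      = (2 * π)⁻¹ * ‖∮ z in C(0, 1), (z⁻¹ ^ j * (z⁻¹ * u z) - z⁻¹ ^ j * (z⁻¹ * v z))‖ := by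
        rw [norm_mul, h2π]
    _ ≤ (2 * π)⁻¹ * (2 * π * 1 * δ) := by
        apply mul_le_mul_of_nonneg_left hnint
        positivity
    _ = δ := by
        have : (2:ℝ) * π ≠ 0 := by positivity
        field_simp


private lemma arith1 (n : ℕ) (ε : ℝ) : ((n:ℝ) + 1) * (ε / (2 * ((n:ℝ) + 1))) = ε / 2 := by
  have hn0 : (n:ℝ) + 1 ≠ 0 := by positivity
  field_simp

private lemma Hfun_props (n : ℕ) (g h : ℂ → ℂ)
    (hc : ContinuousOn g (closedBall (0:ℂ) 1 \ {0}))
    (hhd : DifferentiableOn ℂ h (ball (0:ℂ) 1))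
    (hgh : ∀ z ∈ ball (0:ℂ) 1, z ≠ 0 → g z = h z / z ^ n) :
    (∀ z ∈ closedBall (0:ℂ) 1 \ {0},
      (if z ∈ ball (0:ℂ) 1 then h z else z ^ n * g z) = z ^ n * g z)
    ∧ DifferentiableOn ℂ (fun z => if z ∈ ball (0:ℂ) 1 then h z else z ^ n * g z)
        (ball (0:ℂ) 1)
    ∧ ContinuousOn (fun z => if z ∈ ball (0:ℂ) 1 then h z else z ^ n * g z)
        (closedBall (0:ℂ) 1) := by
  set H : ℂ → ℂ := fun z => if z ∈ ball (0:ℂ) 1 then h z else z ^ n * g z with hH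
  have heq : ∀ z ∈ closedBall (0:ℂ) 1 \ {0}, H z = z ^ n * g z := by
    intro z hz
    by_cases hzb : z ∈ ball (0:ℂ) 1
    · have hz0 : z ≠ 0 := hz.2
      have := hgh z hzb hz0
      simp only [hH, if_pos hzb, this]
      field_simp
    · simp only [hH, if_neg hzb]
  have hball : Set.EqOn H h (ball (0:ℂ) 1) := fun z hz => by simp only [hH, if_pos hz]
  have hdiff : DifferentiableOn ℂ H (ball (0:ℂ) 1) := hhd.congr hball
  refine ⟨heq, hdiff, ?_⟩
  intro z hz
  by_cases hzb : z ∈ ball (0:ℂ) 1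
  · exact ((hdiff.differentiableAt (isOpen_ball.mem_nhds hzb)).continuousAt).continuousWithinAt
  · have hz0 : z ≠ 0 := by
      rintro rfl
      exact hzb (mem_ball_self one_pos)
    have h1 : ContinuousWithinAt (fun w => w ^ n * g w) (closedBall (0:ℂ) 1 \ {0}) z :=
      (((continuous_pow n).continuousOn).mul hc) z ⟨hz, hz0⟩
    have h3 : ContinuousWithinAt H (closedBall (0:ℂ) 1 \ {0}) z :=
      h1.congr (fun w hw => heq w hw) (heq z ⟨hz, hz0⟩)
    rw [Set.diff_eq] at h3
    exact (continuousWithinAt_inter (isOpen_compl_singleton.mem_nhds hz0)).mp h3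

private lemma Hfun_series (n : ℕ) (g h : ℂ → ℂ)
    (hc : ContinuousOn g (closedBall (0:ℂ) 1 \ {0}))
    (hhd : DifferentiableOn ℂ h (ball (0:ℂ) 1))
    (hgh : ∀ z ∈ ball (0:ℂ) 1, z ≠ 0 → g z = h z / z ^ n) :
    HasFPowerSeriesAt (fun z => if z ∈ ball (0:ℂ) 1 then h z else z ^ n * g z)
      (cauchyPowerSeries (fun z => if z ∈ ball (0:ℂ) 1 then h z else z ^ n * g z) 0 1) 0 := by
  obtain ⟨heq, hdiff, hcont⟩ := Hfun_props n g h hc hhd hgh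
  have := Complex.hasFPowerSeriesOnBall_of_differentiable_off_countable
    (R := 1) (c := 0) (f := fun z => if z ∈ ball (0:ℂ) 1 then h z else z ^ n * g z)
    (s := ∅) Set.countable_empty (by simpa using hcont)
    (fun z hz => hdiff.differentiableAt (isOpen_ball.mem_nhds (by simpa using hz.1))) one_pos
  have h1 : ((1 : NNReal) : ℝ) = (1 : ℝ) := by norm_num
  rw [h1] at this
  exact this.hasFPowerSeriesAt


/-- If `Φ` is continuous on `bΔ × I` and for each `t ∈ I` the slice extends
holomorphically through `Δ \ {0}` with a pole of degree ≤ n at 0, then any such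
extension has the form `Σ_{j<n} d_j(t)/ζ^{n-j} + Θ(ζ,t)` with `d_j` continuous on `I`,
`Θ` jointly continuous on `closure(Δ) × I` and holomorphic in `ζ` for each `t`. -/
theorem stmt4 (n : ℕ) (I : Set ℝ) (hI : I.OrdConnected) (Φ : ℂ → ℝ → ℂ)
    (hΦ : ContinuousOn (fun p : ℂ × ℝ => Φ p.1 p.2) (sphere (0:ℂ) 1 ×ˢ I))
    (hext : ∀ t ∈ I, ∃ g : ℂ → ℂ,
      ContinuousOn g (closedBall (0:ℂ) 1 \ {0}) ∧
      DifferentiableOn ℂ g (ball (0:ℂ) 1 \ {0}) ∧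
      (∀ ζ ∈ sphere (0:ℂ) 1, g ζ = Φ ζ t) ∧
      ∃ h : ℂ → ℂ, DifferentiableOn ℂ h (ball (0:ℂ) 1) ∧
        ∀ z ∈ ball (0:ℂ) 1, z ≠ 0 → g z = h z / z ^ n) :
    ∃ d : Fin n → ℝ → ℂ, ∃ Θ : ℂ → ℝ → ℂ,
      (∀ j, ContinuousOn (d j) I) ∧
      ContinuousOn (fun p : ℂ × ℝ => Θ p.1 p.2) (closedBall (0:ℂ) 1 ×ˢ I) ∧
      (∀ t ∈ I, DifferentiableOn ℂ (fun ζ => Θ ζ t) (ball (0:ℂ) 1)) ∧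
      (∀ t ∈ I, ∀ g : ℂ → ℂ,
        (ContinuousOn g (closedBall (0:ℂ) 1 \ {0}) ∧
         DifferentiableOn ℂ g (ball (0:ℂ) 1 \ {0}) ∧
         (∀ ζ ∈ sphere (0:ℂ) 1, g ζ = Φ ζ t) ∧
         ∃ h : ℂ → ℂ, DifferentiableOn ℂ h (ball (0:ℂ) 1) ∧
           ∀ z ∈ ball (0:ℂ) 1, z ≠ 0 → g z = h z / z ^ n) →
        ∀ ζ ∈ closedBall (0:ℂ) 1 \ {0},
          g ζ = (∑ j : Fin n, d j t / ζ ^ (n - (j : ℕ))) + Θ ζ t) := by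
  classical
  choose! g₀ hg₀c hg₀d hg₀s h₀ hh₀d hgh₀ using hext
  -- the holomorphic extension through the origin
  set H : ℝ → ℂ → ℂ := fun t z => if z ∈ ball (0:ℂ) 1 then h₀ t z else z ^ n * g₀ t z with hHdef
  have hsphere_sub : ∀ z ∈ sphere (0:ℂ) 1, z ∈ closedBall (0:ℂ) 1 \ {0} := by
    intro z hz
    have h1 : ‖z‖ = 1 := mem_sphere_zero_iff_norm.mp hz
    refine ⟨by simpa [mem_closedBall_zero_iff] using h1.le, ?_⟩
    simp only [Set.mem_singleton_iff]
    intro h0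
    rw [h0] at h1; simp at h1
  have hprops : ∀ t ∈ I,
      (∀ z ∈ closedBall (0:ℂ) 1 \ {0}, H t z = z ^ n * g₀ t z)
      ∧ DifferentiableOn ℂ (H t) (ball (0:ℂ) 1)
      ∧ ContinuousOn (H t) (closedBall (0:ℂ) 1) := fun t ht =>
    Hfun_props n (g₀ t) (h₀ t) (hg₀c t ht) (hh₀d t ht) (hgh₀ t ht)
  have hseries : ∀ t ∈ I, HasFPowerSeriesAt (H t) (cauchyPowerSeries (H t) 0 1) 0 := fun t ht =>
    Hfun_series n (g₀ t) (h₀ t) (hg₀c t ht) (hh₀d t ht) (hgh₀ t ht)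
  -- the coefficients
  set D : ℕ → ℝ → ℂ := fun j t => (cauchyPowerSeries (fun z => z ^ n * Φ z t) 0 1).coeff j
    with hDdef
  have hcoeff : ∀ t ∈ I, ∀ j, (cauchyPowerSeries (H t) 0 1).coeff j = D j t := by
    intro t ht j
    have hD : D j t = (cauchyPowerSeries (fun z => z ^ n * Φ z t) 0 1).coeff j := rfl
    rw [hD, coeff_eq_integral, coeff_eq_integral]
    congr 1
    refine circleIntegral.integral_congr zero_le_one (fun z hz => ?_)
    have h1 : H t z = z ^ n * g₀ t z := (hprops t ht).1 z (hsphere_sub z hz)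
    rw [h1, hg₀s t ht z hz]
  -- the holomorphic part
  set Θ : ℂ → ℝ → ℂ := fun z t => (Function.swap dslope 0)^[n] (H t) z with hΘdef
  have hΘdiff : ∀ t ∈ I, DifferentiableOn ℂ (fun ζ => Θ ζ t) (ball (0:ℂ) 1) := by
    intro t ht
    exact iter_dslope_diffOn (H t) _ (hprops t ht).2.1 (hseries t ht) n
  have hΘform : ∀ t ∈ I, ∀ z : ℂ, z ≠ 0 →
      Θ z t = (H t z - ∑ j ∈ Finset.range n, D j t * z ^ j) / z ^ n := by
    intro t ht z hz
    rw [hΘdef]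
    simp only
    rw [iter_dslope_eq (H t) n hz]
    congr 2
    refine Finset.sum_congr rfl (fun j hj => ?_)
    rw [iter_dslope_coeff (H t) _ (hseries t ht) j, hcoeff t ht j]
  -- continuity of the slices of Θ on the closed ball
  have hΘcont : ∀ t ∈ I, ContinuousOn (fun ζ => Θ ζ t) (closedBall (0:ℂ) 1) := by
    intro t ht z hz
    by_cases hzb : z ∈ ball (0:ℂ) 1
    · exact (((hΘdiff t ht).differentiableAt
        (isOpen_ball.mem_nhds hzb)).continuousAt).continuousWithinAt
    · have hz0 : z ≠ 0 := by rintro rfl; exact hzb (mem_ball_self one_pos)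
      have hF : ContinuousOn
          (fun w : ℂ => (w ^ n * g₀ t w - ∑ j ∈ Finset.range n, D j t * w ^ j) / w ^ n)
          (closedBall (0:ℂ) 1 \ {0}) := by
        apply ContinuousOn.div
        · exact (((continuous_pow n).continuousOn).mul (hg₀c t ht)).sub
            (Continuous.continuousOn (by continuity))
        · exact (continuous_pow n).continuousOn
        · intro w hw
          exact pow_ne_zero n hw.2
      have h1 : ContinuousWithinAt (fun ζ => Θ ζ t) (closedBall (0:ℂ) 1 \ {0}) z := by
        refine (hF z ⟨hz, hz0⟩).congr (fun w hw => ?_) ?_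
        · rw [hΘform t ht w hw.2, (hprops t ht).1 w hw]
        · rw [hΘform t ht z hz0, (hprops t ht).1 z ⟨hz, hz0⟩]
      rw [Set.diff_eq] at h1
      exact (continuousWithinAt_inter (isOpen_compl_singleton.mem_nhds hz0)).mp h1
  -- uniqueness of the extension
  have huniq : ∀ t ∈ I, ∀ gg : ℂ → ℂ,
      (ContinuousOn gg (closedBall (0:ℂ) 1 \ {0}) ∧
       DifferentiableOn ℂ gg (ball (0:ℂ) 1 \ {0}) ∧
       (∀ ζ ∈ sphere (0:ℂ) 1, gg ζ = Φ ζ t) ∧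
       ∃ hh : ℂ → ℂ, DifferentiableOn ℂ hh (ball (0:ℂ) 1) ∧
         ∀ z ∈ ball (0:ℂ) 1, z ≠ 0 → gg z = hh z / z ^ n) →
      ∀ ζ ∈ closedBall (0:ℂ) 1 \ {0}, gg ζ = g₀ t ζ := by
    intro t ht gg ⟨hgc, hgd, hgs, hh, hhd, hgh⟩ ζ hζ
    obtain ⟨heq', hdiff', hcont'⟩ := Hfun_props n gg hh hgc hhd hgh
    set H' : ℂ → ℂ := fun z => if z ∈ ball (0:ℂ) 1 then hh z else z ^ n * gg z with hH'def
    have hEq : Set.EqOn H' (H t) (closure (ball (0:ℂ) 1)) := by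
      apply Complex.eqOn_closure_of_eqOn_frontier isBounded_ball
      · exact ⟨hdiff', by rw [closure_ball (0:ℂ) one_ne_zero]; exact hcont'⟩
      · exact ⟨(hprops t ht).2.1, by rw [closure_ball (0:ℂ) one_ne_zero]; exact (hprops t ht).2.2⟩
      · rw [frontier_ball (0:ℂ) one_ne_zero]
        intro w hw
        have hw' := hsphere_sub w hw
        show (if w ∈ ball (0:ℂ) 1 then hh w else w ^ n * gg w) = H t w
        rw [heq' w hw', (hprops t ht).1 w hw', hgs w hw, hg₀s t ht w hw]
    have h1 : H' ζ = H t ζ := by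
      apply hEq
      rw [closure_ball (0:ℂ) one_ne_zero]
      exact hζ.1
    have h1' : (if ζ ∈ ball (0:ℂ) 1 then hh ζ else ζ ^ n * gg ζ) = H t ζ := h1
    rw [heq' ζ hζ, (hprops t ht).1 ζ hζ] at h1'
    have hζ0 : (ζ : ℂ) ^ n ≠ 0 := pow_ne_zero n hζ.2
    exact mul_left_cancel₀ hζ0 h1' 
  -- quantitative stability of Θ in t
  have hDB : ∀ t ∈ I, ∀ t₀ ∈ I, ∀ δ : ℝ,
      (∀ ζ ∈ sphere (0:ℂ) 1, ‖Φ ζ t - Φ ζ t₀‖ ≤ δ) → ∀ j, ‖D j t - D j t₀‖ ≤ δ := by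
    intro t ht t₀ ht₀ δ hδ j
    have hΦt : ∀ s ∈ I, ContinuousOn (fun z => z ^ n * Φ z s) (sphere (0:ℂ) 1) := by
      intro s hs
      refine ((continuous_pow n).continuousOn).mul ?_
      exact hΦ.comp ((continuous_id.prodMk continuous_const).continuousOn)
        (fun z hz => ⟨hz, hs⟩)
    refine coeff_diff_est _ _ (hΦt t ht) (hΦt t₀ ht₀) (fun ζ hζ => ?_) j
    have h1 : ‖ζ‖ = 1 := mem_sphere_zero_iff_norm.mp hζ
    have : ζ ^ n * Φ ζ t - ζ ^ n * Φ ζ t₀ = ζ ^ n * (Φ ζ t - Φ ζ t₀) := by ring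
    rw [this, norm_mul, norm_pow, h1, one_pow, one_mul]
    exact hδ ζ hζ
  have hTB : ∀ t ∈ I, ∀ t₀ ∈ I, ∀ δ : ℝ,
      (∀ ζ ∈ sphere (0:ℂ) 1, ‖Φ ζ t - Φ ζ t₀‖ ≤ δ) →
      ∀ z ∈ closedBall (0:ℂ) 1, ‖Θ z t - Θ z t₀‖ ≤ (n + 1) * δ := by
    intro t ht t₀ ht₀ δ hδ z hz
    have hdc : DiffContOnCl ℂ (fun w => Θ w t - Θ w t₀) (ball (0:ℂ) 1) := by
      refine ⟨(hΘdiff t ht).sub (hΘdiff t₀ ht₀), ?_⟩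
      rw [closure_ball (0:ℂ) one_ne_zero]
      exact (hΘcont t ht).sub (hΘcont t₀ ht₀)
    refine Complex.norm_le_of_forall_mem_frontier_norm_le isBounded_ball hdc ?_ ?_
    · intro ζ hζ
      rw [frontier_ball (0:ℂ) one_ne_zero] at hζ
      have hζ' := hsphere_sub ζ hζ
      have h1 : ‖ζ‖ = 1 := mem_sphere_zero_iff_norm.mp hζ
      have hζ0 : ζ ≠ 0 := hζ'.2
      have hΗζ : ∀ s ∈ I, H s ζ = ζ ^ n * Φ ζ s := by
        intro s hs
        rw [(hprops s hs).1 ζ hζ', hg₀s s hs ζ hζ]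
      rw [hΘform t ht ζ hζ0, hΘform t₀ ht₀ ζ hζ0, hΗζ t ht, hΗζ t₀ ht₀, div_sub_div_same]
      have hnum : ζ ^ n * Φ ζ t - ∑ j ∈ Finset.range n, D j t * ζ ^ j -
          (ζ ^ n * Φ ζ t₀ - ∑ j ∈ Finset.range n, D j t₀ * ζ ^ j)
          = ζ ^ n * (Φ ζ t - Φ ζ t₀) - ∑ j ∈ Finset.range n, (D j t - D j t₀) * ζ ^ j := by
        simp only [sub_mul]
        rw [Finset.sum_sub_distrib]
        ring
      rw [hnum, norm_div, norm_pow, h1, one_pow, div_one]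
      calc ‖ζ ^ n * (Φ ζ t - Φ ζ t₀) - ∑ j ∈ Finset.range n, (D j t - D j t₀) * ζ ^ j‖
          ≤ ‖ζ ^ n * (Φ ζ t - Φ ζ t₀)‖ + ‖∑ j ∈ Finset.range n, (D j t - D j t₀) * ζ ^ j‖ :=
            norm_sub_le _ _
        _ ≤ δ + n * δ := by
            have hδ0 : 0 ≤ δ := le_trans (norm_nonneg _) (hδ ζ hζ)
            refine add_le_add ?_ ?_
            · rw [norm_mul, norm_pow, h1, one_pow, one_mul]; exact hδ ζ hζ
            · refine le_trans (norm_sum_le _ _) ?_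
              have : ∀ j ∈ Finset.range n, ‖(D j t - D j t₀) * ζ ^ j‖ ≤ δ := by
                intro j hj
                rw [norm_mul, norm_pow, h1, one_pow, mul_one]
                exact hDB t ht t₀ ht₀ δ hδ j
              calc ∑ j ∈ Finset.range n, ‖(D j t - D j t₀) * ζ ^ j‖
                  ≤ ∑ j ∈ Finset.range n, δ := Finset.sum_le_sum this
                _ = n * δ := by simp [mul_comm]
        _ = (n + 1) * δ := by ring
    · rw [closure_ball (0:ℂ) one_ne_zero]; exact hz
  -- now assemble
  refine ⟨fun j => D j, Θ, ?_, ?_, hΘdiff, ?_⟩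
  · -- continuity of the coefficients
    intro j t₀ ht₀
    rw [Metric.continuousWithinAt_iff]
    intro ε hε
    obtain ⟨v, hvo, hvt₀, hvest⟩ := tube_est I Φ hΦ ht₀ (half_pos hε)
    obtain ⟨δ₂, hδ₂, hδ₂v⟩ := Metric.isOpen_iff.mp hvo t₀ hvt₀
    refine ⟨δ₂, hδ₂, fun {t} ht hdist => ?_⟩
    have htv : t ∈ v ∩ I := ⟨hδ₂v hdist, ht⟩
    have := hDB t ht t₀ ht₀ (ε / 2) (hvest t htv) j
    rw [dist_eq_norm]
    calc ‖D j t - D j t₀‖ ≤ ε / 2 := this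
      _ < ε := half_lt_self hε
  · -- joint continuity of Θ
    rintro ⟨z₀, t₀⟩ ⟨hz₀, ht₀⟩
    rw [Metric.continuousWithinAt_iff]
    intro ε hε
    have hδ' : (0:ℝ) < ε / (2 * (n + 1)) := by positivity
    obtain ⟨v, hvo, hvt₀, hvest⟩ := tube_est I Φ hΦ ht₀ hδ'
    obtain ⟨δ₂, hδ₂, hδ₂v⟩ := Metric.isOpen_iff.mp hvo t₀ hvt₀
    obtain ⟨δ₁, hδ₁, hδ₁est⟩ := Metric.continuousWithinAt_iff.mp
      (hΘcont t₀ ht₀ z₀ hz₀) (ε / 2) (half_pos hε)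
    refine ⟨min δ₁ δ₂, lt_min hδ₁ hδ₂, ?_⟩
    rintro ⟨z, t⟩ ⟨hz, ht⟩ hdist
    simp only [Prod.dist_eq, max_lt_iff] at hdist
    have hdz : dist z z₀ < δ₁ := lt_of_lt_of_le hdist.1 (min_le_left _ _)
    have hdt : dist t t₀ < δ₂ := lt_of_lt_of_le hdist.2 (min_le_right _ _)
    have htv : t ∈ v ∩ I := ⟨hδ₂v hdt, ht⟩
    have h1 : ‖Θ z t - Θ z t₀‖ ≤ (n + 1) * (ε / (2 * (n + 1))) :=
      hTB t ht t₀ ht₀ _ (hvest t htv) z hz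
    have h1' : ‖Θ z t - Θ z t₀‖ ≤ ε / 2 := le_trans h1 (le_of_eq (arith1 n ε))
    have h2 : dist (Θ z t₀) (Θ z₀ t₀) < ε / 2 := hδ₁est hz hdz
    calc dist (Θ z t) (Θ z₀ t₀) ≤ dist (Θ z t) (Θ z t₀) + dist (Θ z t₀) (Θ z₀ t₀) :=
          dist_triangle _ _ _
      _ < ε / 2 + ε / 2 := by
          refine add_lt_add_of_le_of_lt ?_ h2
          rw [dist_eq_norm]; exact h1'
      _ = ε := by ring
  · -- the decomposition formula
    intro t ht gg hgg ζ hζ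
    have hgg₀ : gg ζ = g₀ t ζ := huniq t ht gg hgg ζ hζ
    have hζ0 : ζ ≠ 0 := hζ.2
    have hζn : (ζ : ℂ) ^ n ≠ 0 := pow_ne_zero n hζ0
    have hsum : (∑ j : Fin n, D j t / ζ ^ (n - (j : ℕ)))
        = (∑ j ∈ Finset.range n, D j t * ζ ^ j) / ζ ^ n := by
      rw [Finset.sum_div]
      rw [Fin.sum_univ_eq_sum_range (fun j => D j t / ζ ^ (n - j)) n]
      refine Finset.sum_congr rfl (fun j hj => ?_)
      have hjn : j ≤ n := (Finset.mem_range.mp hj).le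
      have hpow : (ζ : ℂ) ^ n = ζ ^ j * ζ ^ (n - j) := by
        rw [← pow_add, Nat.add_sub_cancel' hjn]
      rw [hpow, mul_comm (D j t) (ζ ^ j), mul_div_mul_left _ _ (pow_ne_zero j hζ0)]
    rw [hgg₀, hsum, hΘform t ht ζ hζ0, (hprops t ht).1 ζ hζ, ← add_div,
      add_sub_cancel, mul_div_cancel_left₀ _ hζn]
end

section
/- Let 0 < t < 1 and ρ(λ)² = (λ-t)(λ-1/t) for 0 ≤ λ < t, and set φ(z,λ) = λ + ρ(λ)²/(z-λ). Let H_0, ..., H_n be holomorphic near 0. If for each λ ∈ (0,t) the function z ↦ H_0(z) + H_1(z)φ(z,λ) + ... + H_n(z)φ(z,λ)^n has a zero of order ≥ n at z = 0, then each H_j has a zero of order ≥ n at 0. -/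
open Complex

open Function Nat

private lemma iterDeriv_coeff {f : ℂ → ℂ} {p : FormalMultilinearSeries ℂ ℂ ℂ}
    (hp : HasFPowerSeriesAt f p 0) (k : ℕ) :
    iteratedDeriv k f 0 = k ! * p.coeff k := by
  obtain ⟨r, hr⟩ := hp
  have h := hr.factorial_smul (1:ℂ) k
  rw [iteratedDeriv_eq_iteratedFDeriv, ← h]
  rw [nsmul_eq_mul]
  rfl

private lemma factor : ∀ (k : ℕ) (f : ℂ → ℂ), AnalyticAt ℂ f 0 →
    (∀ i < k, iteratedDeriv i f 0 = 0) →
    ∃ G : ℂ → ℂ, AnalyticAt ℂ G 0 ∧ (∀ z, f z = z ^ k * G z) ∧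
      G 0 = iteratedDeriv k f 0 / k ! := by
  intro k
  induction k with
  | zero => intro f hf _; exact ⟨f, hf, by simp, by simp⟩
  | succ k ih =>
    intro f hf h
    obtain ⟨p, hp⟩ := hf
    have hf0 : f 0 = 0 := by simpa using h 0 (Nat.succ_pos k)
    have hds : HasFPowerSeriesAt (dslope f 0) p.fslope 0 :=
      hp.has_fpower_series_dslope_fslope
    have hfz : ∀ z, f z = z * dslope f 0 z := by
      intro z
      rcases eq_or_ne z 0 with rfl | hz
      · simpa using hf0
      · rw [dslope_of_ne f hz, slope_def_field]
        field_simp [hf0]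
        rw [hf0]; ring
    have hder : ∀ i < k, iteratedDeriv i (dslope f 0) 0 = 0 := by
      intro i hi
      have h1 := h (i+1) (by omega)
      rw [iterDeriv_coeff hp (i+1)] at h1
      have hc : p.coeff (i+1) = 0 := by
        have : ((i+1)! : ℂ) ≠ 0 := Nat.cast_ne_zero.mpr (Nat.factorial_ne_zero _)
        rcases _root_.mul_eq_zero.mp h1 with h2 | h2
        · exact absurd h2 this
        · exact h2
      rw [iterDeriv_coeff hds i, FormalMultilinearSeries.coeff_fslope, hc, mul_zero]
    obtain ⟨G, hG, hGz, hG0⟩ := ih (dslope f 0) hds.analyticAt hder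
    refine ⟨G, hG, ?_, ?_⟩
    · intro z; rw [hfz z, hGz z]; ring
    · rw [hG0, iterDeriv_coeff hds k, FormalMultilinearSeries.coeff_fslope,
        iterDeriv_coeff hp (k+1)]
      have h1 : ((k)! : ℂ) ≠ 0 := Nat.cast_ne_zero.mpr (Nat.factorial_ne_zero _)
      have h2 : (((k+1))! : ℂ) ≠ 0 := Nat.cast_ne_zero.mpr (Nat.factorial_ne_zero _)
      rw [mul_div_cancel_left₀ _ h1, mul_div_cancel_left₀ _ h2]

/-- Let `0 < t < 1`, `ρ(l)² = (l-t)(l-1/t)` and `φ(z,l) = l + ρ(l)²/(z-l)`. If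
`H_0,…,H_n` are holomorphic near `0` and for each `l ∈ (0,t)` the function
`z ↦ Σ_j H_j(z) φ(z,l)^j` has a zero of order ≥ n at `0`, then each `H_j` has a zero
of order ≥ n at `0`. -/
theorem stmt10 (n : ℕ) (t : ℝ) (ht0 : 0 < t) (ht1 : t < 1)
    (H : Fin (n+1) → ℂ → ℂ) (hH : ∀ j, AnalyticAt ℂ (H j) 0)
    (hzero : ∀ l ∈ Set.Ioo (0:ℝ) t, ∀ k < n,
      iteratedDeriv k (fun z : ℂ =>
        ∑ j : Fin (n+1),
          H j z * ((l : ℂ) + (((l - t) * (l - 1/t) : ℝ) : ℂ) / (z - (l : ℂ))) ^ (j : ℕ)) 0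
        = 0) :
    ∀ j, ∀ k < n, iteratedDeriv k (H j) 0 = 0 := by
  classical
  have htC : (t:ℂ) ≠ 0 := Complex.ofReal_ne_zero.mpr ht0.ne'
  have key : ∀ k, k < n → ∀ j, iteratedDeriv k (H j) 0 = 0 := by
    intro k
    induction k using Nat.strong_induction_on with
    | _ k IH =>
      intro hk
      have hfac : ∀ j', ∃ G : ℂ → ℂ, AnalyticAt ℂ G 0 ∧ (∀ z, H j' z = z ^ k * G z) ∧
          G 0 = iteratedDeriv k (H j') 0 / k ! :=
        fun j' => factor k (H j') (hH j') (fun i hi => IH i hi (lt_trans hi hk) j')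
      choose G hGan hGfac hG0 using hfac
      set c : Fin (n+1) → ℂ := fun j' => G j' 0 with hcdef
      set x : Fin (n+1) → ℂ := fun i => (t:ℂ) + 1/t - (((i:ℕ):ℂ)+2)/t with hxdef
      -- evaluation at the points x i
      have hval : ∀ i : Fin (n+1),
          ∑ j' : Fin (n+1), c j' * x i ^ (j' : ℕ) = 0 := by
        intro i
        set lv : ℝ := t / ((i:ℕ) + 2) with hlv
        have hl0 : (0:ℝ) < lv := by positivity
        have hlt : lv < t := by
          rw [hlv]
          apply div_lt_self ht0
          have : (0:ℝ) ≤ ((i:ℕ):ℝ) := Nat.cast_nonneg _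
          linarith
        have hlvC : (lv:ℂ) ≠ 0 := Complex.ofReal_ne_zero.mpr hl0.ne'
        set g : ℂ → ℂ := fun z =>
          (lv : ℂ) + (((lv - t) * (lv - 1/t) : ℝ) : ℂ) / (z - (lv : ℂ)) with hg
        have hgan : AnalyticAt ℂ g 0 := by
          apply analyticAt_const.add
          apply analyticAt_const.div (analyticAt_id.sub analyticAt_const)
          simpa using hlvC
        set F : ℂ → ℂ := fun z => ∑ j' : Fin (n+1), H j' z * g z ^ (j':ℕ) with hF
        have hFan : AnalyticAt ℂ F 0 :=
          Finset.analyticAt_fun_sum _ (fun j' _ => (hH j').mul (hgan.pow _))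
        have hFder : ∀ i' ≤ k, iteratedDeriv i' F 0 = 0 :=
          fun i' hi' => hzero lv ⟨hl0, hlt⟩ i' (lt_of_le_of_lt hi' hk)
        obtain ⟨G', hG'an, hG'fac, hG'0⟩ :=
          factor k F hFan (fun i' hi' => hFder i' (le_of_lt hi'))
        have hG'00 : G' 0 = 0 := by rw [hG'0, hFder k le_rfl, zero_div]
        set Φ : ℂ → ℂ := fun z => ∑ j' : Fin (n+1), G j' z * g z ^ (j':ℕ) with hΦ
        have hΦan : AnalyticAt ℂ Φ 0 :=
          Finset.analyticAt_fun_sum _ (fun j' _ => (hGan j').mul (hgan.pow _))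
        have heq : ∀ z : ℂ, z ≠ 0 → Φ z = G' z := by
          intro z hz
          have h1 : z ^ k * Φ z = z ^ k * G' z := by
            rw [← hG'fac z, hF, hΦ]
            simp only [Finset.mul_sum]
            exact Finset.sum_congr rfl fun j' _ => by rw [hGfac j' z]; ring
          exact mul_left_cancel₀ (pow_ne_zero k hz) h1
        have hΦ0 : Φ 0 = 0 := by
          have h1 : Filter.Tendsto Φ (nhdsWithin 0 {(0:ℂ)}ᶜ) (nhds (Φ 0)) :=
            hΦan.continuousAt.continuousWithinAt
          have h2 : Filter.Tendsto G' (nhdsWithin 0 {(0:ℂ)}ᶜ) (nhds (G' 0)) :=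
            hG'an.continuousAt.continuousWithinAt
          have h3 : Φ =ᶠ[nhdsWithin (0:ℂ) {(0:ℂ)}ᶜ] G' := by
            filter_upwards [self_mem_nhdsWithin] with z hz using heq z hz
          exact (tendsto_nhds_unique (Filter.Tendsto.congr' h3 h1) h2).trans hG'00
        have hx : g 0 = x i := by
          have hm : (((i:ℕ):ℂ) + 2) ≠ 0 := by
            have : ((((i:ℕ):ℕ) + 2 : ℕ) : ℂ) ≠ 0 := Nat.cast_ne_zero.mpr (by omega)
            push_cast at this
            exact this
          have hlvc : (lv:ℂ) = (t:ℂ) / (((i:ℕ):ℂ) + 2) := by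
            rw [hlv]; push_cast; ring
          have h0a : (0:ℂ) - (lv:ℂ) ≠ 0 := by simpa using hlvC
          have hgen : (lv:ℂ) + (((lv:ℂ) - t) * ((lv:ℂ) - 1/t)) / (0 - (lv:ℂ))
              = (t:ℂ) + 1/t - 1/(lv:ℂ) := by
            field_simp
            ring
          have hinv : 1/(lv:ℂ) = (((i:ℕ):ℂ)+2)/t := by
            rw [hlvc, one_div_div]
          rw [hg]
          push_cast
          rw [hgen, hinv]
        rw [← hΦ0, hΦ]
        exact Finset.sum_congr rfl fun j' _ => by rw [hx]
      -- injectivity of the points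
      have hxinj : Function.Injective x := by
        intro a b hab
        have h1 : (((a:ℕ):ℂ)+2)/t = (((b:ℕ):ℂ)+2)/t := by
          have := sub_right_inj.mp hab
          exact this
        have h2 : ((a:ℕ):ℂ) = ((b:ℕ):ℂ) := by
          rw [div_eq_div_iff htC htC] at h1
          have h3 : (((a:ℕ):ℂ)+2) = (((b:ℕ):ℂ)+2) := mul_right_cancel₀ htC h1
          linear_combination h3
        exact Fin.ext (Nat.cast_injective h2)
      -- polynomial argument
      set P : Polynomial ℂ := ∑ j' : Fin (n+1), Polynomial.C (c j') * Polynomial.X ^ (j' : ℕ)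
        with hP
      have hdeg : P.natDegree < Fintype.card (Fin (n+1)) := by
        rw [Fintype.card_fin]
        apply Nat.lt_succ_of_le
        apply Polynomial.natDegree_sum_le_of_forall_le
        intro j' _
        refine (Polynomial.natDegree_C_mul_le _ _).trans ?_
        rw [Polynomial.natDegree_X_pow]
        omega
      have heval : ∀ i, P.eval (x i) = 0 := by
        intro i
        rw [hP, Polynomial.eval_finset_sum]
        simpa using hval i
      have hP0 : P = 0 :=
        Polynomial.eq_zero_of_natDegree_lt_card_of_eval_eq_zero P hxinj heval hdeg
      intro j
      have hcoeff : P.coeff (j : ℕ) = c j := by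
        rw [hP, Polynomial.finset_sum_coeff]
        rw [Finset.sum_eq_single j]
        · simp
        · intro b _ hb
          rw [Polynomial.coeff_C_mul, Polynomial.coeff_X_pow, if_neg, mul_zero]
          exact fun hh => hb (Fin.ext hh.symm)
        · simp
      rw [hP0, Polynomial.coeff_zero] at hcoeff
      have : iteratedDeriv k (H j) 0 / (k ! : ℂ) = 0 := by
        rw [← hG0 j]; exact hcoeff.symm
      have hk0 : ((k)! : ℂ) ≠ 0 := Nat.cast_ne_zero.mpr (Nat.factorial_ne_zero _)
      field_simp at this
      simpa using this
  exact fun j k hk => key k hk j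
end

section
/- The function f(z) = z(z - 1/2)/(1 - |z|²) on the open unit disc Δ extends holomorphically from every circle Γ ⊂ Δ with hyperbolic center 0 or hyperbolic center 1/2 (through the disc bounded by Γ), yet f is not holomorphic on Δ. -/
open Complex Metric

lemma normcast' (z : ℂ) : ((‖z‖ : ℝ) : ℂ)^2 = z * (starRingEnd ℂ) z := by
  rw [Complex.mul_conj]
  norm_cast
  exact Complex.sq_norm _

lemma den_ne (R : ℝ) (hR1 : R < 1) (ζ : ℂ) (hζ : ‖ζ‖ = R) : (1 : ℂ) - (1/2) * ζ ≠ 0 := by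
  intro H
  have hζ2 : ζ = 2 := by linear_combination -2 * H
  rw [hζ2] at hζ
  simp at hζ
  linarith

lemma mob_lt (R : ℝ) (hR1 : R < 1) (ζ : ℂ) (hζ : ‖ζ‖ = R) :
    ‖(1/2 - ζ) / (1 - (1/2) * ζ)‖ < 1 := by
  have hns : Complex.normSq ζ = R^2 := by
    rw [← Complex.sq_norm, hζ]
  have hne := den_ne R hR1 ζ hζ
  have hpos : (0:ℝ) < ‖(1 - (1/2)*ζ : ℂ)‖ := norm_pos_iff.mpr hne
  rw [norm_div, div_lt_one hpos]
  have hR0' : 0 ≤ R := hζ ▸ norm_nonneg ζ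
  have h1 : ‖(1/2 - ζ : ℂ)‖^2 < ‖(1 - (1/2)*ζ : ℂ)‖^2 := by
    rw [Complex.sq_norm, Complex.sq_norm]
    have h2 : ζ.re^2 + ζ.im^2 = R^2 := by
      rw [← hns]; simp [Complex.normSq_apply]; ring
    simp only [Complex.normSq_apply]
    simp
    nlinarith [sq_nonneg ζ.im]
  nlinarith [norm_nonneg (1/2 - ζ : ℂ)]

lemma key (R : ℝ) (hR0 : 0 < R) (hR1 : R < 1) (ζ : ℂ) (hζ : ‖ζ‖ = R) (z : ℂ)
    (hz : z = (1/2 - ζ) / (1 - (1/2) * ζ)) :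
    z * (2*(1-(R:ℂ)^2) - z*(4-(R:ℂ)^2)) / (2*(1-(R:ℂ)^2)*(z-2))
      = z * (z - 1/2) / (1 - (‖z‖ : ℂ)^2) := by
  have hζ0 : ζ ≠ 0 := by
    intro H; rw [H] at hζ; simp at hζ; linarith
  have hb : (1:ℂ) - (1/2)*ζ ≠ 0 := den_ne R hR1 ζ hζ
  have hA : (2:ℂ) - ζ ≠ 0 := by
    intro H
    have hζ2 : ζ = 2 := by linear_combination -H
    rw [hζ2] at hζ; simp at hζ; linarith
  have hB : 2*ζ - (R:ℂ)^2 ≠ 0 := by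
    intro H
    have hζv : ζ = ((R^2/2 : ℝ) : ℂ) := by push_cast; linear_combination H/2
    rw [hζv] at hζ
    have h6 : R^2/2 = R := by simpa using hζ
    nlinarith
  have hr1 : (1:ℂ) - (R:ℂ)^2 ≠ 0 := by
    have h : (1:ℂ) - (R:ℂ)^2 = ((1 - R^2 : ℝ) : ℂ) := by push_cast; ring
    rw [h, Complex.ofReal_ne_zero]
    nlinarith
  have hzlt : ‖z‖ < 1 := hz ▸ mob_lt R hR1 ζ hζ
  have hz2 : z - 2 ≠ 0 := by
    intro H
    have h2 : ‖z‖ = 2 := by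
      have h3 : z = 2 := by linear_combination H
      rw [h3]; simp
    linarith
  have hden2 : (1:ℂ) - (‖z‖ : ℂ)^2 ≠ 0 := by
    intro H
    have h4 : ((1 - ‖z‖^2 : ℝ) : ℂ) = 0 := by push_cast; linear_combination H
    rw [Complex.ofReal_eq_zero] at h4
    nlinarith [norm_nonneg z]
  have hden1 : (2:ℂ)*(1-(R:ℂ)^2)*(z-2) ≠ 0 :=
    mul_ne_zero (mul_ne_zero two_ne_zero hr1) hz2
  have hw : (starRingEnd ℂ) ζ = (R:ℂ)^2 / ζ := by
    rw [eq_div_iff hζ0, mul_comm, Complex.mul_conj]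
    norm_cast
    rw [← Complex.sq_norm, hζ]
  have hz' : z = (1 - 2*ζ) / (2 - ζ) := by
    rw [hz, div_eq_div_iff hb hA]; ring
  have hcz : (starRingEnd ℂ) z = (ζ - 2*(R:ℂ)^2) / (2*ζ - (R:ℂ)^2) := by
    rw [hz', map_div₀, map_sub, map_sub, map_mul, map_one, map_ofNat, hw,
      div_eq_div_iff (by
        intro H
        apply hA
        have h5 : ((starRingEnd ℂ) (2 - ζ)) = 0 := by
          rw [map_sub, map_ofNat, hw, H]
        simpa using congrArg (starRingEnd ℂ) h5) hB]
    field_simp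
  rw [div_eq_div_iff hden1 hden2, normcast' z, hcz, hz']
  field_simp
  ring

lemma normcast (z : ℂ) : ((‖z‖ : ℝ) : ℂ)^2 = ((Complex.normSq z : ℝ) : ℂ) := by
  norm_cast; exact Complex.sq_norm _

lemma not_diff_aux : ¬ DifferentiableAt ℂ (fun z : ℂ => 1 - (‖z‖ : ℂ)^2) (1/4 : ℂ) := by
  intro h
  set d : ℂ := deriv (fun z : ℂ => 1 - (‖z‖ : ℂ)^2) (1/4:ℂ) with hdd
  have hd : HasDerivAt (fun z : ℂ => 1 - (‖z‖ : ℂ)^2) d (1/4:ℂ) := h.hasDerivAt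
  -- real direction
  have haux : HasDerivAt (fun w : ℂ => (1/4:ℂ) + w) 1 0 := by
    simpa using (hasDerivAt_id (0:ℂ)).const_add (1/4:ℂ)
  have hd0 : HasDerivAt (fun z : ℂ => 1 - (‖z‖ : ℂ)^2) d ((fun w : ℂ => (1/4:ℂ) + w) 0) := by
    simpa using hd
  have hre : HasDerivAt (fun t : ℝ => (fun z : ℂ => 1 - (‖z‖ : ℂ)^2) ((1/4:ℂ) + t)) d 0 := by
    have h1 := hd0.comp (0:ℂ) haux
    simpa using h1.comp_ofReal
  have hre' : HasDerivAt (fun t : ℝ => ((1 - (1/4 + t)^2 : ℝ) : ℂ)) (((-(1/2) : ℝ)) : ℂ) 0 := by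
    have h2 : HasDerivAt (fun t : ℝ => 1 - (1/4 + t)^2) (-(1/2)) 0 := by
      have h3 := (((hasDerivAt_id (0:ℝ)).const_add (1/4:ℝ)).pow 2).const_sub 1
      norm_num at h3 ⊢
      convert h3 using 1
    exact h2.ofReal_comp
  have heq : (fun t : ℝ => (fun z : ℂ => 1 - (‖z‖ : ℂ)^2) ((1/4:ℂ) + t)) =
      fun t : ℝ => ((1 - (1/4 + t)^2 : ℝ) : ℂ) := by
    funext t
    simp only [normcast]
    push_cast
    simp [Complex.normSq_apply]
    ring
  rw [heq] at hre
  have hd1 : d = -(1/2) := by simpa using hre.unique hre'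
  -- imaginary direction
  have haux2 : HasDerivAt (fun w : ℂ => (1/4:ℂ) + w * I) I 0 := by
    simpa using ((hasDerivAt_id (0:ℂ)).mul_const I).const_add (1/4:ℂ)
  have hd0' : HasDerivAt (fun z : ℂ => 1 - (‖z‖ : ℂ)^2) d ((fun w : ℂ => (1/4:ℂ) + w * I) 0) := by
    simpa using hd
  have him : HasDerivAt (fun t : ℝ => (fun z : ℂ => 1 - (‖z‖ : ℂ)^2) ((1/4:ℂ) + t * I)) (d * I) 0 := by
    have h1 := hd0'.comp (0:ℂ) haux2
    have h2 : HasDerivAt (fun w : ℂ => (fun z : ℂ => 1 - (‖z‖ : ℂ)^2) ((1/4:ℂ) + w * I)) (d * I) 0 := by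
      exact h1
    simpa using h2.comp_ofReal
  have him' : HasDerivAt (fun t : ℝ => ((1 - (1/16 + t^2) : ℝ) : ℂ)) (((0 : ℝ)) : ℂ) 0 := by
    have h2 : HasDerivAt (fun t : ℝ => 1 - (1/16 + t^2)) 0 0 := by
      have h3 := (((hasDerivAt_id (0:ℝ)).pow 2).const_add (1/16:ℝ)).const_sub 1
      norm_num at h3 ⊢
      convert h3 using 1
    exact h2.ofReal_comp
  have heq2 : (fun t : ℝ => (fun z : ℂ => 1 - (‖z‖ : ℂ)^2) ((1/4:ℂ) + t * I)) =
      fun t : ℝ => ((1 - (1/16 + t^2) : ℝ) : ℂ) := by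
    funext t
    simp only [normcast]
    push_cast
    simp [Complex.normSq_apply]
    ring
  rw [heq2] at him
  have hd2 : d * I = 0 := by simpa using him.unique him'
  rw [hd1] at hd2
  simp [Complex.ext_iff] at hd2

lemma not_diff_main (hnd : ¬ DifferentiableAt ℂ (fun z : ℂ => 1 - (‖z‖ : ℂ)^2) (1/4 : ℂ)) :
    ¬ DifferentiableOn ℂ (fun z : ℂ => z * (z - 1/2) / (1 - (‖z‖ : ℂ)^2)) (ball (0:ℂ) 1) := by
  intro hdiff
  have hz₀mem : (1/4:ℂ) ∈ ball (0:ℂ) 1 := by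
    simp
    norm_num
  have hf : DifferentiableAt ℂ (fun z : ℂ => z * (z - 1/2) / (1 - (‖z‖ : ℂ)^2)) (1/4:ℂ) :=
    (hdiff (1/4:ℂ) hz₀mem).differentiableAt (isOpen_ball.mem_nhds hz₀mem)
  have hfval : (fun z : ℂ => z * (z - 1/2) / (1 - (‖z‖ : ℂ)^2)) (1/4:ℂ) ≠ 0 := by
    simp only [normcast]
    norm_num [Complex.normSq_apply, div_eq_zero_iff, Complex.ext_iff]
  have hnum : DifferentiableAt ℂ (fun z : ℂ => z * (z - 1/2)) (1/4:ℂ) := by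
    fun_prop
  have hq : DifferentiableAt ℂ
      (fun z : ℂ => (z * (z - 1/2)) / ((fun z : ℂ => z * (z - 1/2) / (1 - (‖z‖ : ℂ)^2)) z)) (1/4:ℂ) :=
    hnum.div hf hfval
  apply hnd
  apply hq.congr_of_eventuallyEq
  -- eventually, the quotient equals 1 - ‖z‖²
  have hopen : ∀ᶠ z : ℂ in nhds (1/4:ℂ), z * (z - 1/2) ≠ 0 ∧ (1 - (‖z‖ : ℂ)^2) ≠ 0 := by
    have hc : ContinuousAt (fun z : ℂ => (z * (z - 1/2), 1 - (‖z‖ : ℂ)^2)) (1/4:ℂ) := by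
      apply ContinuousAt.prodMk
      · fun_prop
      · apply ContinuousAt.sub continuousAt_const
        apply ContinuousAt.pow
        exact Complex.continuous_ofReal.continuousAt.comp (continuous_norm.continuousAt)
    have : {p : ℂ × ℂ | p.1 ≠ 0 ∧ p.2 ≠ 0} ∈ nhds ((fun z : ℂ => (z * (z - 1/2), 1 - (‖z‖ : ℂ)^2)) (1/4:ℂ)) := by
      apply IsOpen.mem_nhds
      · exact (isOpen_compl_singleton.preimage continuous_fst).inter (isOpen_compl_singleton.preimage continuous_snd)
      · constructor
        · norm_num [Complex.ext_iff]
        · simp only [normcast]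
          norm_num [Complex.normSq_apply, Complex.ext_iff]
    exact hc.preimage_mem_nhds this
  filter_upwards [hopen] with z hz
  obtain ⟨h1, h2⟩ := hz
  rw [eq_comm, div_div_eq_mul_div, mul_comm, mul_div_assoc, div_self h1, mul_one]

lemma sphere_norm_bound (c : ℂ) (ρ : ℝ) (hρ : 0 < ρ)
    (hsp : ∀ z ∈ sphere c ρ, ‖z‖ < 1) : ∀ w ∈ closedBall c ρ, ‖w‖ < 1 := by
  have hkey : ‖c‖ + ρ < 1 := by
    by_cases hc : c = 0
    · have : ((ρ:ℝ) : ℂ) ∈ sphere c ρ := by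
        simp [hc, mem_sphere_iff_norm, abs_of_pos hρ]
      have := hsp _ this
      simp [hc, abs_of_pos hρ] at this ⊢
      simpa [abs_of_pos hρ] using this
    · set z₀ : ℂ := c + (ρ/‖c‖ : ℝ) • c with hz₀
      have hcpos : 0 < ‖c‖ := norm_pos_iff.mpr hc
      have habs : ‖c‖ ≠ 0 := by simpa using ne_of_gt hcpos
      have hmem : z₀ ∈ sphere c ρ := by
        simp only [mem_sphere_iff_norm, hz₀, add_sub_cancel_left]
        rw [norm_smul, Real.norm_eq_abs, abs_of_pos (by positivity)]
        field_simp [habs]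
      have hnorm : ‖z₀‖ = ‖c‖ + ρ := by
        have : z₀ = ((1 + ρ/‖c‖ : ℝ)) • c := by
          rw [hz₀]; module
        rw [this, norm_smul, Real.norm_eq_abs, abs_of_pos (by positivity)]
        field_simp [habs]
      have := hsp _ hmem
      rw [hnorm] at this
      exact this
  intro w hw
  calc ‖w‖ = ‖(w - c) + c‖ := by ring_nf
    _ ≤ ‖w - c‖ + ‖c‖ := norm_add_le _ _
    _ ≤ ρ + ‖c‖ := by
        have := mem_closedBall_iff_norm.mp hw
        linarith
    _ < 1 := by linarith

/-- `f(z) = z(z-1/2)/(1-|z|²)` extends holomorphically from every circle in `Δ` with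
hyperbolic center `0` or `1/2`, yet `f` is not holomorphic on `Δ`. -/
theorem stmt14 :
    (∀ γ ∈ ({0, 1/2} : Set ℂ), ∀ R : ℝ, 0 < R → R < 1 →
      ∀ c : ℂ, ∀ ρ : ℝ, 0 < ρ →
        sphere c ρ = (fun ζ => (γ - ζ) / (1 - starRingEnd ℂ γ * ζ)) '' sphere (0:ℂ) R →
        ∃ g : ℂ → ℂ, ContinuousOn g (closedBall c ρ) ∧ DifferentiableOn ℂ g (ball c ρ) ∧
          ∀ z ∈ sphere c ρ, g z = z * (z - 1/2) / (1 - (‖z‖ : ℂ)^2)) ∧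
    ¬ DifferentiableOn ℂ (fun z : ℂ => z * (z - 1/2) / (1 - (‖z‖ : ℂ)^2))
        (ball (0:ℂ) 1) := by
  constructor
  · rintro γ (rfl | rfl) R hR0 hR1 c ρ hρ h
    · -- γ = 0
      refine ⟨fun z => z * (z - 1/2) / (1 - (R:ℂ)^2), ?_, ?_, ?_⟩
      · exact ((continuous_id.mul (continuous_id.sub continuous_const)).div_const _).continuousOn
      · exact ((differentiable_id.mul (differentiable_id.sub (differentiable_const _))).div_const
          _).differentiableOn
      · intro z hzmem
        rw [h] at hzmem
        obtain ⟨ζ, hζ, hzeq⟩ := hzmem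
        simp only [mem_sphere_iff_norm, sub_zero] at hζ
        have hzζ : z = -ζ := by
          rw [← hzeq]; simp
        have hnz : ‖z‖ = R := by rw [hzζ, norm_neg, hζ]
        rw [hnz]
    · -- γ = 1/2
      have hconj : (starRingEnd ℂ) ((1:ℂ)/2) = 1/2 := by
        rw [map_div₀, map_one, map_ofNat]
      have hsp : ∀ z ∈ sphere c ρ, ‖z‖ < 1 := by
        intro z hzmem
        rw [h] at hzmem
        obtain ⟨ζ, hζ, hzeq⟩ := hzmem
        simp only [mem_sphere_iff_norm, sub_zero] at hζ
        rw [← hzeq, hconj]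
        exact mob_lt R hR1 ζ hζ
      have hball : ∀ w ∈ closedBall c ρ, ‖w‖ < 1 := sphere_norm_bound c ρ hρ hsp
      have hr1 : (1:ℂ) - (R:ℂ)^2 ≠ 0 := by
        have hcast : (1:ℂ) - (R:ℂ)^2 = ((1 - R^2 : ℝ) : ℂ) := by push_cast; ring
        rw [hcast, Complex.ofReal_ne_zero]
        nlinarith
      have hne2 : ∀ w ∈ closedBall c ρ, (2:ℂ)*(1-(R:ℂ)^2)*(w-2) ≠ 0 := by
        intro w hw
        refine mul_ne_zero (mul_ne_zero two_ne_zero hr1) ?_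
        intro H
        have hw2 : w = 2 := by linear_combination H
        have := hball w hw
        rw [hw2] at this
        norm_num at this
      refine ⟨fun z => z * (2*(1-(R:ℂ)^2) - z*(4-(R:ℂ)^2)) / (2*(1-(R:ℂ)^2)*(z-2)), ?_, ?_, ?_⟩
      · apply ContinuousOn.div
        · fun_prop
        · fun_prop
        · exact hne2
      · apply DifferentiableOn.div
        · fun_prop
        · fun_prop
        · exact fun w hw => hne2 w (ball_subset_closedBall hw)
      · intro z hzmem
        rw [h] at hzmem
        obtain ⟨ζ, hζ, hzeq⟩ := hzmem
        simp only [mem_sphere_iff_norm, sub_zero] at hζ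
        rw [hconj] at hzeq
        exact key R hR0 hR1 ζ hζ z hzeq.symm
  · -- not differentiable
    exact not_diff_main not_diff_aux
end

section
/- Let f be continuous on the closed unit disc and n ∈ ℕ, and let F(z) = f(z)/(1-|z|²)^n on Δ. For α ∈ Δ and a circle Γ ⊂ Δ with hyperbolic center α, the function z ↦ (z - c(Γ))^n f(z) extends holomorphically from Γ (through the disc bounded by Γ) if and only if the function z ↦ (z-α)^n F(z) extends holomorphically from Γ, where c(Γ) is the Euclidean center of Γ. -/
open Complex Metric

lemma memAux (α : ℂ) (hα : ‖α‖ < 1) (R : ℝ) (hR0 : 0 < R) (hR1 : R < 1) (w : ℂ) (hw : ‖w‖ = R) :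
    (α - w)/(1 - starRingEnd ℂ α * w) ∈
      sphere ((((1-R^2)/(1 - Complex.normSq α * R^2) : ℝ) : ℂ) * α)
        (R*(1 - Complex.normSq α)/(1 - Complex.normSq α * R^2)) := by
  have hA : Complex.normSq α < 1 := by
    rw [Complex.normSq_eq_norm_sq]; nlinarith [norm_nonneg α]
  have hA0 : 0 ≤ Complex.normSq α := Complex.normSq_nonneg α
  have hD : (0:ℝ) < 1 - Complex.normSq α * R^2 := by nlinarith
  have hbw : (1 - starRingEnd ℂ α * w) ≠ 0 := by
    intro h
    have h1 : starRingEnd ℂ α * w = 1 := by linear_combination -h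
    have : ‖starRingEnd ℂ α * w‖ = 1 := by simp [h1]
    rw [norm_mul, RCLike.norm_conj, hw] at this
    nlinarith [norm_nonneg α]
  have hw0 : w ≠ 0 := by
    intro h; rw [h, norm_zero] at hw; exact absurd hw.symm (ne_of_gt hR0)
  have hwa : w - α * R^2 ≠ 0 := by
    intro h
    have h1 : w = α * R^2 := by linear_combination h
    have : ‖w‖ = ‖α‖ * R^2 := by rw [h1, norm_mul]; norm_num
    rw [hw] at this
    nlinarith [norm_nonneg α]
  have hcw : starRingEnd ℂ w = (R^2 : ℂ) / w := by
    field_simp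
    rw [mul_comm, Complex.mul_conj]
    norm_cast
    rw [Complex.normSq_eq_norm_sq, hw]
  have hαw : (1 - α * ((R:ℂ)^2 / w)) ≠ 0 := by
    have he : (1 - α * ((R:ℂ)^2 / w)) = (w - α * R^2)/w := by field_simp
    rw [he]; exact div_ne_zero hwa hw0
  rw [mem_sphere_iff_norm]
  have hρ' : 0 ≤ R*(1 - Complex.normSq α)/(1 - Complex.normSq α * R^2) :=
    div_nonneg (by nlinarith) (by nlinarith)
  set u := (α - w)/(1 - starRingEnd ℂ α * w) -
    (((1-R^2)/(1 - Complex.normSq α * R^2) : ℝ) : ℂ) * α with hu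
  have key : u * starRingEnd ℂ u = ((R*(1 - Complex.normSq α)/(1 - Complex.normSq α * R^2))^2 : ℝ) := by
    rw [hu]
    simp only [map_sub, map_div₀, map_mul, map_one, Complex.conj_conj, Complex.conj_ofReal]
    rw [hcw]
    push_cast
    have hD2 : (1 - α * starRingEnd ℂ α * (R:ℂ)^2) ≠ 0 := by
      rw [Complex.mul_conj]
      intro h
      have : ((1 - Complex.normSq α * R^2 : ℝ) : ℂ) = 0 := by push_cast; linear_combination h
      rw [Complex.ofReal_eq_zero] at this
      linarith
    rw [show ((Complex.normSq α : ℂ)) = α * starRingEnd ℂ α from (Complex.mul_conj α).symm]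
    field_simp [hbw, (by rwa [mul_comm] at hbw : (1 - w * starRingEnd ℂ α) ≠ 0), hw0, hαw, hD2]
    ring
  have hns : Complex.normSq u = (R*(1 - Complex.normSq α)/(1 - Complex.normSq α * R^2))^2 := by
    have h2 := Complex.mul_conj u
    rw [key] at h2
    exact_mod_cast h2.symm
  rw [← Real.sqrt_sq hρ', ← hns, Complex.normSq_eq_norm_sq, Real.sqrt_sq (norm_nonneg u)]

lemma keyAux (α : ℂ) (hα : ‖α‖ < 1) (R : ℝ) (hR0 : 0 < R) (hR1 : R < 1) (w : ℂ) (hw : ‖w‖ = R) :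
    (1 - ((‖(α - w)/(1 - starRingEnd ℂ α * w)‖ : ℝ) : ℂ)^2) *
      ((α - w)/(1 - starRingEnd ℂ α * w) - (((1-R^2)/(1 - Complex.normSq α * R^2) : ℝ) : ℂ) * α)
    = (((1-R^2)/(1 - Complex.normSq α * R^2) : ℝ) : ℂ) * ((α - w)/(1 - starRingEnd ℂ α * w) - α) *
        (1 - starRingEnd ℂ α * ((α - w)/(1 - starRingEnd ℂ α * w))) := by
  have hA : Complex.normSq α < 1 := by
    rw [Complex.normSq_eq_norm_sq]; nlinarith [norm_nonneg α]
  have hA0 : 0 ≤ Complex.normSq α := Complex.normSq_nonneg α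
  have hD : (0:ℝ) < 1 - Complex.normSq α * R^2 := by nlinarith
  have hbw : (1 - starRingEnd ℂ α * w) ≠ 0 := by
    intro h
    have h1 : starRingEnd ℂ α * w = 1 := by linear_combination -h
    have : ‖starRingEnd ℂ α * w‖ = 1 := by simp [h1]
    rw [norm_mul, RCLike.norm_conj, hw] at this
    nlinarith [norm_nonneg α]
  have hw0 : w ≠ 0 := by
    intro h; rw [h, norm_zero] at hw; exact absurd hw.symm (ne_of_gt hR0)
  have hwa : w - α * R^2 ≠ 0 := by
    intro h
    have h1 : w = α * R^2 := by linear_combination h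
    have : ‖w‖ = ‖α‖ * R^2 := by rw [h1, norm_mul]; norm_num
    rw [hw] at this
    nlinarith [norm_nonneg α]
  have hcw : starRingEnd ℂ w = (R^2 : ℂ) / w := by
    field_simp
    rw [mul_comm, Complex.mul_conj]
    norm_cast
    rw [Complex.normSq_eq_norm_sq, hw]
  have hαw : (1 - α * ((R:ℂ)^2 / w)) ≠ 0 := by
    have he : (1 - α * ((R:ℂ)^2 / w)) = (w - α * R^2)/w := by field_simp
    rw [he]; exact div_ne_zero hwa hw0
  have hD2 : (1 - α * starRingEnd ℂ α * (R:ℂ)^2) ≠ 0 := by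
    rw [Complex.mul_conj]
    intro h
    have : ((1 - Complex.normSq α * R^2 : ℝ) : ℂ) = 0 := by push_cast; linear_combination h
    rw [Complex.ofReal_eq_zero] at this
    linarith
  set z := (α - w)/(1 - starRingEnd ℂ α * w) with hz
  have hzz : ((‖z‖ : ℝ) : ℂ)^2 = z * starRingEnd ℂ z := by
    rw [← Complex.ofReal_pow, Complex.sq_norm, Complex.mul_conj]
  rw [hzz, hz]
  simp only [map_sub, map_div₀, map_mul, map_one, Complex.conj_conj]
  rw [hcw]
  push_cast
  rw [show ((Complex.normSq α : ℂ)) = α * starRingEnd ℂ α from (Complex.mul_conj α).symm]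
  field_simp [hbw, (by rwa [mul_comm] at hbw : (1 - w * starRingEnd ℂ α) ≠ 0), hw0, hαw, hD2]
  ring

lemma sphereSub (c c' : ℂ) (ρ ρ' : ℝ) (hρ : 0 < ρ) (h : sphere c ρ ⊆ sphere c' ρ') :
    c = c' ∧ ρ = ρ' := by
  have q : ∀ u : ℂ, ‖u‖ = ρ' → u.re^2 + u.im^2 = ρ'^2 := by
    intro u hu
    have h1 := Complex.sq_norm u
    rw [Complex.normSq_apply, hu] at h1
    nlinarith
  have mem : ∀ v : ℂ, ‖v‖ = ρ → c + v ∈ sphere c ρ := by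
    intro v hv; simp [mem_sphere_iff_norm, hv]
  have hρR : ‖((ρ:ℝ) : ℂ)‖ = ρ := by rw [Complex.norm_real, Real.norm_eq_abs, abs_of_pos hρ]
  have hρI : ‖((ρ:ℝ) : ℂ) * Complex.I‖ = ρ := by
    rw [norm_mul, Complex.norm_I, mul_one, Complex.norm_real, Real.norm_eq_abs, abs_of_pos hρ]
  have hρR' : ‖-((ρ:ℝ) : ℂ)‖ = ρ := by rw [norm_neg]; exact hρR
  have hρI' : ‖-(((ρ:ℝ) : ℂ) * Complex.I)‖ = ρ := by rw [norm_neg]; exact hρI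
  have e1 := q _ (mem_sphere_iff_norm.mp (h (mem _ hρR)))
  have e2 := q _ (mem_sphere_iff_norm.mp (h (mem _ hρR')))
  have e3 := q _ (mem_sphere_iff_norm.mp (h (mem _ hρI)))
  have e4 := q _ (mem_sphere_iff_norm.mp (h (mem _ hρI')))
  simp only [Complex.add_re, Complex.add_im, Complex.sub_re, Complex.sub_im, Complex.neg_re,
    Complex.neg_im, Complex.ofReal_re, Complex.ofReal_im, Complex.mul_re, Complex.mul_im,
    Complex.I_re, Complex.I_im] at e1 e2 e3 e4
  have hre : c.re = c'.re := by nlinarith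
  have him : c.im = c'.im := by nlinarith
  have hcc : c = c' := Complex.ext hre him
  refine ⟨hcc, ?_⟩
  have := mem_sphere_iff_norm.mp (h (mem _ hρR))
  rw [hcc] at this
  rw [← this]
  simp [abs_of_pos hρ]


/-- Let `f` be continuous on the closed unit disc, `F(z) = f(z)/(1-|z|²)ⁿ`, and let
`Γ = sphere c ρ` be a circle in `Δ` with hyperbolic center `α`.  Then
`z ↦ (z-c)ⁿ f(z)` extends holomorphically from `Γ` iff `z ↦ (z-α)ⁿ F(z)` does. -/
theorem stmt17 (n : ℕ) (f : ℂ → ℂ) (hf : ContinuousOn f (closedBall (0:ℂ) 1))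
    (α : ℂ) (hα : α ∈ ball (0:ℂ) 1) (R : ℝ) (hR0 : 0 < R) (hR1 : R < 1)
    (c : ℂ) (ρ : ℝ) (hρ : 0 < ρ)
    (hΓ : sphere c ρ = (fun ζ => (α - ζ) / (1 - starRingEnd ℂ α * ζ)) '' sphere (0:ℂ) R) :
    (∃ g : ℂ → ℂ, ContinuousOn g (closedBall c ρ) ∧ DifferentiableOn ℂ g (ball c ρ) ∧
       ∀ z ∈ sphere c ρ, g z = (z - c) ^ n * f z) ↔
    (∃ g : ℂ → ℂ, ContinuousOn g (closedBall c ρ) ∧ DifferentiableOn ℂ g (ball c ρ) ∧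
       ∀ z ∈ sphere c ρ, g z = (z - α) ^ n * (f z / (1 - (‖z‖ : ℂ)^2) ^ n)) := by
  have hα' : ‖α‖ < 1 := mem_ball_zero_iff.mp hα
  have hAn : Complex.normSq α = ‖α‖^2 := by
    rw [Complex.normSq_eq_norm_sq]
  have hA : Complex.normSq α < 1 := by nlinarith [norm_nonneg α]
  have hA0 : 0 ≤ Complex.normSq α := Complex.normSq_nonneg α
  have hD : (0:ℝ) < 1 - Complex.normSq α * R^2 := by nlinarith
  set μ : ℝ := (1-R^2)/(1 - Complex.normSq α * R^2) with hμdef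
  set ρ' : ℝ := R*(1 - Complex.normSq α)/(1 - Complex.normSq α * R^2) with hρ'def
  have hμpos : 0 < μ := div_pos (by nlinarith) hD
  have hμ0 : ((μ:ℝ):ℂ) ≠ 0 := by
    simpa using ne_of_gt hμpos
  have hsub : sphere c ρ ⊆ sphere (((μ:ℝ):ℂ) * α) ρ' := by
    rw [hΓ]
    rintro z ⟨w, hwmem, rfl⟩
    exact memAux α hα' R hR0 hR1 w (mem_sphere_zero_iff_norm.mp hwmem)
  obtain ⟨hc, hρρ⟩ := sphereSub _ _ _ _ hρ hsub
  -- closed ball inside unit ball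
  have hcn : ‖c‖ = μ * ‖α‖ := by
    rw [hc, norm_mul, Complex.norm_real, Real.norm_eq_abs, abs_of_pos hμpos]
  have hsum : μ * ‖α‖ + ρ' < 1 := by
    rw [hμdef, hρ'def, hAn]
    have hD2 := hD
    rw [hAn] at hD2
    rw [div_mul_eq_mul_div, ← add_div, div_lt_one hD2]
    nlinarith [norm_nonneg α, mul_pos (mul_pos (sub_pos.mpr hα') (sub_pos.mpr hR1))
      (sub_pos.mpr (by nlinarith [norm_nonneg α] : ‖α‖ * R < 1))]
  have hball : closedBall c ρ ⊆ ball (0:ℂ) 1 := by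
    intro x hx
    rw [mem_closedBall_iff_norm] at hx
    rw [mem_ball_zero_iff]
    calc ‖x‖ ≤ ‖x - c‖ + ‖c‖ := by simpa using norm_add_le (x - c) c
    _ ≤ ρ + μ * ‖α‖ := by rw [hcn]; linarith
    _ < 1 := by rw [hρρ]; linarith
  have hbz : ∀ z ∈ closedBall c ρ, (1 - starRingEnd ℂ α * z) ≠ 0 := by
    intro z hz h
    have h1 : starRingEnd ℂ α * z = 1 := by linear_combination -h
    have h2 : ‖starRingEnd ℂ α * z‖ = 1 := by simp [h1]
    have h3 : ‖z‖ < 1 := mem_ball_zero_iff.mp (hball hz)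
    rw [norm_mul, RCLike.norm_conj] at h2
    nlinarith [norm_nonneg α, norm_nonneg z]
  have hs : ∀ z ∈ sphere c ρ, (1 - ((‖z‖:ℝ):ℂ)^2) ≠ 0 := by
    intro z hz h
    have h3 : ‖z‖ < 1 := mem_ball_zero_iff.mp (hball (sphere_subset_closedBall hz))
    have : ((1 - ‖z‖^2 : ℝ) : ℂ) = 0 := by push_cast; linear_combination h
    rw [Complex.ofReal_eq_zero] at this
    nlinarith [norm_nonneg z]
  have key : ∀ z ∈ sphere c ρ, (1 - ((‖z‖:ℝ):ℂ)^2) * (z - c)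
      = ((μ:ℝ):ℂ) * (z - α) * (1 - starRingEnd ℂ α * z) := by
    intro z hz
    rw [hc]
    rw [hΓ] at hz
    obtain ⟨w, hwmem, rfl⟩ := hz
    exact keyAux α hα' R hR0 hR1 w (mem_sphere_zero_iff_norm.mp hwmem)
  have hden : ∀ z ∈ closedBall c ρ, (((μ:ℝ):ℂ) * (1 - starRingEnd ℂ α * z))^n ≠ 0 :=
    fun z hz => pow_ne_zero n (mul_ne_zero hμ0 (hbz z hz))
  have hdiff : Differentiable ℂ (fun z => (((μ:ℝ):ℂ) * (1 - starRingEnd ℂ α * z))^n) := by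
    fun_prop
  constructor
  · rintro ⟨g, hgc, hgd, hgb⟩
    refine ⟨fun z => g z / (((μ:ℝ):ℂ) * (1 - starRingEnd ℂ α * z))^n, ?_, ?_, ?_⟩
    · exact hgc.div (hdiff.continuous.continuousOn) hden
    · exact hgd.div (hdiff.differentiableOn) (fun z hz => hden z (ball_subset_closedBall hz))
    · intro z hz
      show g z / (((μ:ℝ):ℂ) * (1 - starRingEnd ℂ α * z))^n
          = (z - α) ^ n * (f z / (1 - ((‖z‖:ℝ):ℂ)^2) ^ n)
      rw [hgb z hz]
      have k := key z hz
      have kn : ((1 - ((‖z‖:ℝ):ℂ)^2) * (z - c))^n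
          = (((μ:ℝ):ℂ) * (z - α) * (1 - starRingEnd ℂ α * z))^n := by rw [k]
      have h1 := hs z hz
      have h2 := hbz z (sphere_subset_closedBall hz)
      simp only [mul_pow] at kn
      rw [mul_pow, ← mul_div_assoc,
        div_eq_div_iff (mul_ne_zero (pow_ne_zero n hμ0) (pow_ne_zero n h2)) (pow_ne_zero n h1)]
      linear_combination f z * kn
  · rintro ⟨g, hgc, hgd, hgb⟩
    refine ⟨fun z => g z * (((μ:ℝ):ℂ) * (1 - starRingEnd ℂ α * z))^n, ?_, ?_, ?_⟩
    · exact hgc.mul (hdiff.continuous.continuousOn)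
    · exact hgd.mul (hdiff.differentiableOn)
    · intro z hz
      show g z * (((μ:ℝ):ℂ) * (1 - starRingEnd ℂ α * z))^n = (z - c) ^ n * f z
      rw [hgb z hz]
      have k := key z hz
      have kn : ((1 - ((‖z‖:ℝ):ℂ)^2) * (z - c))^n
          = (((μ:ℝ):ℂ) * (z - α) * (1 - starRingEnd ℂ α * z))^n := by rw [k]
      have h1 := hs z hz
      have h2 := hbz z (sphere_subset_closedBall hz)
      simp only [mul_pow] at kn
      rw [mul_pow, ← mul_div_assoc, div_mul_eq_mul_div, div_eq_iff (pow_ne_zero n h1)]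
      linear_combination (-(f z)) * kn
end

section
/- The function g(z,w) = |w|² on the unit sphere bB ⊂ ℂ² extends holomorphically into the unit ball B along each complex line through the origin and along each complex line parallel to a coordinate axis meeting B, yet g does not extend holomorphically through B. -/
open Complex Metric

/-- `g(z,w) = |w|²` on the unit sphere of `ℂ²` extends holomorphically into the ball
along every complex line through the origin and along every complex line parallel to a
coordinate axis meeting the ball, yet `g` does not extend holomorphically through the
ball. -/
theorem stmt18 :
    (∀ a b : ℂ, ‖a‖^2 + ‖b‖^2 = 1 →
      ∃ h : ℂ → ℂ, ContinuousOn h (closedBall (0:ℂ) 1) ∧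
        DifferentiableOn ℂ h (ball (0:ℂ) 1) ∧
        ∀ ζ ∈ sphere (0:ℂ) 1, h ζ = ((‖b * ζ‖^2 : ℝ) : ℂ)) ∧
    (∀ cz : ℂ, ‖cz‖ < 1 →
      ∃ h : ℂ → ℂ, ContinuousOn h (closedBall (0:ℂ) (Real.sqrt (1 - ‖cz‖^2))) ∧
        DifferentiableOn ℂ h (ball (0:ℂ) (Real.sqrt (1 - ‖cz‖^2))) ∧
        ∀ w ∈ sphere (0:ℂ) (Real.sqrt (1 - ‖cz‖^2)), h w = ((‖w‖^2 : ℝ) : ℂ)) ∧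
    (∀ cw : ℂ, ‖cw‖ < 1 →
      ∃ h : ℂ → ℂ, ContinuousOn h (closedBall (0:ℂ) (Real.sqrt (1 - ‖cw‖^2))) ∧
        DifferentiableOn ℂ h (ball (0:ℂ) (Real.sqrt (1 - ‖cw‖^2))) ∧
        ∀ z ∈ sphere (0:ℂ) (Real.sqrt (1 - ‖cw‖^2)), h z = ((‖cw‖^2 : ℝ) : ℂ)) ∧
    ¬ ∃ G : ℂ × ℂ → ℂ,
        ContinuousOn G {p : ℂ × ℂ | ‖p.1‖^2 + ‖p.2‖^2 ≤ 1} ∧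
        DifferentiableOn ℂ G {p : ℂ × ℂ | ‖p.1‖^2 + ‖p.2‖^2 < 1} ∧
        ∀ p : ℂ × ℂ, ‖p.1‖^2 + ‖p.2‖^2 = 1 → G p = ((‖p.2‖^2 : ℝ) : ℂ) := by
  refine ⟨?_, ?_, ?_, ?_⟩
  · intro a b hab
    refine ⟨fun _ => ((‖b‖^2 : ℝ) : ℂ), continuousOn_const, differentiableOn_const _, ?_⟩
    intro ζ hζ
    rw [mem_sphere_zero_iff_norm] at hζ
    rw [norm_mul, hζ, mul_one]
  · intro cz hcz
    have h1 : (0:ℝ) ≤ 1 - ‖cz‖^2 := by nlinarith [norm_nonneg cz]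
    refine ⟨fun _ => (((1 - ‖cz‖^2 : ℝ)) : ℂ), continuousOn_const,
      differentiableOn_const _, ?_⟩
    intro w hw
    rw [mem_sphere_zero_iff_norm] at hw
    rw [hw, Real.sq_sqrt h1]
  · intro cw hcw
    exact ⟨fun _ => ((‖cw‖^2 : ℝ) : ℂ), continuousOn_const,
      differentiableOn_const _, fun z _ => rfl⟩
  · rintro ⟨G, hGc, hGd, hGb⟩
    have hmem0 : ∀ w : ℂ, w ∈ closedBall (0:ℂ) 1 →
        ((0:ℂ), w) ∈ {p : ℂ × ℂ | ‖p.1‖^2 + ‖p.2‖^2 ≤ 1} := by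
      intro w hw
      rw [mem_closedBall_zero_iff] at hw
      simp only [Set.mem_setOf_eq, norm_zero, id_eq]
      nlinarith [norm_nonneg w]
    have hmem0' : ∀ z : ℂ, z ∈ closedBall (0:ℂ) 1 →
        (z, (0:ℂ)) ∈ {p : ℂ × ℂ | ‖p.1‖^2 + ‖p.2‖^2 ≤ 1} := by
      intro z hz
      rw [mem_closedBall_zero_iff] at hz
      simp only [Set.mem_setOf_eq, norm_zero, id_eq]
      nlinarith [norm_nonneg z]
    -- slice z = 0
    have hdc1 : DiffContOnCl ℂ (fun w : ℂ => G (0, w)) (ball (0:ℂ) 1) := by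
      constructor
      · apply hGd.comp ((differentiableOn_const (0:ℂ)).prodMk differentiableOn_id)
        intro w hw
        rw [mem_ball_zero_iff] at hw
        simp only [Set.mem_setOf_eq, norm_zero, id_eq]
        nlinarith [norm_nonneg w]
      · rw [closure_ball (0:ℂ) one_ne_zero]
        apply hGc.comp ((continuousOn_const).prodMk continuousOn_id)
        intro w hw
        exact hmem0 w hw
    have hdc2 : DiffContOnCl ℂ (fun z : ℂ => G (z, 0)) (ball (0:ℂ) 1) := by
      constructor
      · apply hGd.comp (differentiableOn_id.prodMk (differentiableOn_const (0:ℂ)))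
        intro z hz
        rw [mem_ball_zero_iff] at hz
        simp only [Set.mem_setOf_eq, norm_zero, id_eq]
        nlinarith [norm_nonneg z]
      · rw [closure_ball (0:ℂ) one_ne_zero]
        apply hGc.comp (continuousOn_id.prodMk continuousOn_const)
        intro z hz
        exact hmem0' z hz
    have hfr : frontier (ball (0:ℂ) 1) = sphere (0:ℂ) 1 := frontier_ball _ one_ne_zero
    have h00a : G (0, 0) = 1 := by
      have := Complex.eqOn_of_eqOn_frontier (isBounded_ball) hdc1
        (diffContOnCl_const (c := (1:ℂ))) ?_ (mem_ball_self one_pos)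
      · simpa using this
      · intro w hw
        rw [hfr, mem_sphere_zero_iff_norm] at hw
        have : ‖(0:ℂ)‖^2 + ‖w‖^2 = 1 := by rw [norm_zero]; simp [hw]
        have hb := hGb (0, w) this
        simp only at hb
        simp [hb, hw]
    have h00b : G (0, 0) = 0 := by
      have := Complex.eqOn_of_eqOn_frontier (isBounded_ball) hdc2
        (diffContOnCl_const (c := (0:ℂ))) ?_ (mem_ball_self one_pos)
      · simpa using this
      · intro z hz
        rw [hfr, mem_sphere_zero_iff_norm] at hz
        have : ‖z‖^2 + ‖(0:ℂ)‖^2 = 1 := by rw [norm_zero]; simp [hz]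
        have hb := hGb (z, 0) this
        simp only at hb
        simp [hb]
    rw [h00a] at h00b
    exact one_ne_zero h00b
end

section
/- Let f be continuous on the unit sphere bB ⊂ ℂ², and for z ∈ Δ define c_m(z) = (1-|z|²)^{-m/2} · (1/2π) ∫_{-π}^{π} e^{-imθ} f(z, e^{iθ}√(1-|z|²)) dθ for m ∈ ℤ. Then each c_m is continuous on Δ, and for m < 0, the function (1-|z|²)^{|m|/2} c_m(z) extends continuously to the closed disc with boundary value 0; moreover (z,w) ↦ w^m c_m(z) (the m-th Fourier term of f) extends continuously to bB. -/
open Complex Metric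

private lemma stmt19_ext (f : ℂ × ℂ → ℂ)
    (hf : ContinuousOn f {p : ℂ × ℂ | ‖p.1‖^2 + ‖p.2‖^2 = 1}) :
    ∃ F : ℂ × ℂ → ℂ, Continuous F ∧ ∀ p ∈ {p : ℂ × ℂ | ‖p.1‖^2 + ‖p.2‖^2 = 1}, F p = f p := by
  have hS : IsClosed {p : ℂ × ℂ | ‖p.1‖^2 + ‖p.2‖^2 = 1} :=
    isClosed_eq (by fun_prop) continuous_const
  obtain ⟨g, hg⟩ := ContinuousMap.exists_restrict_eq (Y := ℂ) hS
    ⟨_, continuousOn_iff_continuous_restrict.mp hf⟩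
  exact ⟨g, g.continuous, fun p hp => ContinuousMap.congr_fun hg ⟨p, hp⟩⟩

private lemma stmt19_rot (F : ℂ × ℂ → ℂ) (m : ℤ) (z w : ℂ) :
    (∫ θ in (-Real.pi)..Real.pi,
      Complex.exp (-(m : ℂ) * Complex.I * (θ : ℂ)) * F (z, Complex.exp ((θ : ℂ) * Complex.I) * w))
    = Complex.exp ((m : ℂ) * (Complex.arg w : ℂ) * Complex.I) *
      ∫ θ in (-Real.pi)..Real.pi, Complex.exp (-(m : ℂ) * Complex.I * (θ : ℂ)) *
        F (z, Complex.exp ((θ : ℂ) * Complex.I) * ((‖w‖ : ℝ) : ℂ)) := by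
  set φ : ℝ := Complex.arg w with hφ
  set r : ℝ := ‖w‖ with hr
  set k : ℝ → ℂ := fun u => Complex.exp (-(m : ℂ) * Complex.I * (u : ℂ)) *
    F (z, Complex.exp ((u : ℂ) * Complex.I) * ((r : ℝ) : ℂ)) with hk
  have hper : Function.Periodic k (2 * Real.pi) := by
    intro u
    have h1 : Complex.exp (-(m : ℂ) * Complex.I * ((u + 2*Real.pi : ℝ) : ℂ)) =
        Complex.exp (-(m : ℂ) * Complex.I * (u : ℂ)) := by
      push_cast
      rw [mul_add, Complex.exp_add]
      have : (-(m:ℂ) * Complex.I * (2*Real.pi)) = (-m : ℤ) * (2 * Real.pi * Complex.I) := by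
        push_cast; ring
      rw [this, Complex.exp_int_mul_two_pi_mul_I, mul_one]
    have h2 : Complex.exp (((u + 2*Real.pi : ℝ) : ℂ) * Complex.I) =
        Complex.exp ((u:ℂ) * Complex.I) := by
      push_cast
      rw [add_mul, Complex.exp_add, Complex.exp_two_pi_mul_I, mul_one]
    simp only [hk, h1, h2]
  have hw : w = Complex.exp ((φ:ℂ) * Complex.I) * (r : ℂ) := by
    rw [hφ, hr, mul_comm]; exact (Complex.norm_mul_exp_arg_mul_I w).symm
  have hint : ∀ θ : ℝ, Complex.exp (-(m : ℂ) * Complex.I * (θ : ℂ)) *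
      F (z, Complex.exp ((θ : ℂ) * Complex.I) * w)
      = Complex.exp ((m:ℂ) * (φ:ℂ) * Complex.I) * k (θ + φ) := by
    intro θ
    rw [hw]
    simp only [hk]
    push_cast
    have e1 : Complex.exp (((θ:ℂ)+(φ:ℂ)) * Complex.I) =
        Complex.exp ((θ:ℂ)*Complex.I) * Complex.exp ((φ:ℂ)*Complex.I) := by
      rw [← Complex.exp_add]; ring_nf
    have e2 : Complex.exp ((m:ℂ) * (φ:ℂ) * Complex.I) *
        Complex.exp (-(m:ℂ) * Complex.I * ((θ:ℂ)+(φ:ℂ))) =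
        Complex.exp (-(m:ℂ)*Complex.I*(θ:ℂ)) := by
      rw [← Complex.exp_add]; congr 1; ring
    rw [e1, ← e2]; ring
  calc (∫ θ in (-Real.pi)..Real.pi, Complex.exp (-(m : ℂ) * Complex.I * (θ : ℂ)) *
        F (z, Complex.exp ((θ : ℂ) * Complex.I) * w))
      = ∫ θ in (-Real.pi)..Real.pi, Complex.exp ((m:ℂ) * (φ:ℂ) * Complex.I) * k (θ + φ) := by
        simp only [hint]
    _ = Complex.exp ((m:ℂ) * (φ:ℂ) * Complex.I) * ∫ θ in (-Real.pi)..Real.pi, k (θ + φ) := by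
        rw [← intervalIntegral.integral_const_mul]
    _ = Complex.exp ((m:ℂ) * (φ:ℂ) * Complex.I) * ∫ θ in (-Real.pi + φ)..(Real.pi + φ), k θ := by
        rw [intervalIntegral.integral_comp_add_right]
    _ = Complex.exp ((m:ℂ) * (φ:ℂ) * Complex.I) * ∫ θ in (-Real.pi)..Real.pi, k θ := by
        congr 1
        have := hper.intervalIntegral_add_eq (-Real.pi + φ) (-Real.pi)
        rw [show -Real.pi + φ + 2 * Real.pi = Real.pi + φ by ring,
          show -Real.pi + 2 * Real.pi = Real.pi by ring] at this
        exact this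

/-- Fourier coefficients of a continuous function on the unit sphere of `ℂ²`:
each `c_m` is continuous on `Δ`; for `m < 0` the function `(1-|z|²)^{|m|/2} c_m(z)`
extends continuously to the closed disc with boundary value `0`; and each Fourier term
`(z,w) ↦ wᵐ c_m(z)` extends continuously to the sphere. -/
theorem stmt19 (f : ℂ × ℂ → ℂ)
    (hf : ContinuousOn f {p : ℂ × ℂ | ‖p.1‖^2 + ‖p.2‖^2 = 1})
    (c : ℤ → ℂ → ℂ)
    (hc : ∀ m : ℤ, ∀ z ∈ ball (0:ℂ) 1,
      c m z = ((Real.sqrt (1 - ‖z‖^2) : ℝ) : ℂ) ^ (-m) *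
        ((2 * Real.pi)⁻¹ • ∫ θ in (-Real.pi)..Real.pi,
          Complex.exp (-(m : ℂ) * Complex.I * (θ : ℂ)) *
            f (z, Complex.exp ((θ : ℂ) * Complex.I) * ((Real.sqrt (1 - ‖z‖^2) : ℝ) : ℂ)))) :
    (∀ m : ℤ, ContinuousOn (c m) (ball (0:ℂ) 1)) ∧
    (∀ m : ℤ, m < 0 → ∃ g : ℂ → ℂ, ContinuousOn g (closedBall (0:ℂ) 1) ∧
      (∀ z ∈ ball (0:ℂ) 1, g z = ((Real.sqrt (1 - ‖z‖^2) : ℝ) : ℂ) ^ (-m) * c m z) ∧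
      (∀ z ∈ sphere (0:ℂ) 1, g z = 0)) ∧
    (∀ m : ℤ, ∃ h : ℂ × ℂ → ℂ,
      ContinuousOn h {p : ℂ × ℂ | ‖p.1‖^2 + ‖p.2‖^2 = 1} ∧
      ∀ z w : ℂ, ‖z‖^2 + ‖w‖^2 = 1 → w ≠ 0 → h (z, w) = w ^ m * c m z) := by
  obtain ⟨F, hFc, hFf⟩ := stmt19_ext f hf
  set s : ℂ → ℝ := fun z => Real.sqrt (1 - ‖z‖^2) with hs
  set G : ℤ → ℂ × ℂ → ℂ := fun m p => (2 * Real.pi)⁻¹ • ∫ θ in (-Real.pi)..Real.pi,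
    Complex.exp (-(m : ℂ) * Complex.I * (θ : ℂ)) *
      F (p.1, Complex.exp ((θ : ℂ) * Complex.I) * p.2) with hG
  have hGcont : ∀ m, Continuous (G m) := by
    intro m
    show Continuous (fun p : ℂ × ℂ => (2 * Real.pi)⁻¹ • ∫ θ in (-Real.pi)..Real.pi, Complex.exp (-(m : ℂ) * Complex.I * (θ : ℂ)) * F (p.1, Complex.exp ((θ : ℂ) * Complex.I) * p.2))
    have hI : Continuous (fun p : ℂ × ℂ => ∫ θ in (-Real.pi)..Real.pi, Complex.exp (-(m : ℂ) * Complex.I * (θ : ℂ)) * F (p.1, Complex.exp ((θ : ℂ) * Complex.I) * p.2)) := by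
      apply intervalIntegral.continuous_parametric_intervalIntegral_of_continuous'
      fun_prop
    exact hI.const_smul ((2 * Real.pi)⁻¹ : ℝ)
  have hscont : Continuous fun z => ((s z : ℝ) : ℂ) :=
    Complex.continuous_ofReal.comp ((continuous_const.sub ((continuous_norm).pow 2)).sqrt)
  have honS : ∀ z : ℂ, ‖z‖ ≤ 1 → ∀ θ : ℝ,
      (z, Complex.exp ((θ : ℂ) * Complex.I) * ((s z : ℝ) : ℂ)) ∈
        {p : ℂ × ℂ | ‖p.1‖^2 + ‖p.2‖^2 = 1} := by
    intro z hz θ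
    have h1 : (0:ℝ) ≤ 1 - ‖z‖^2 := by nlinarith [norm_nonneg z]
    have : ‖Complex.exp ((θ : ℂ) * Complex.I) * ((s z : ℝ) : ℂ)‖ = s z := by
      rw [norm_mul, Complex.norm_exp_ofReal_mul_I, one_mul, Complex.norm_real,
        Real.norm_eq_abs, _root_.abs_of_nonneg (Real.sqrt_nonneg _)]
    simp only [Set.mem_setOf_eq, this]; simp only [hs]
    rw [Real.sq_sqrt h1]
    ring
  have hcG : ∀ m : ℤ, ∀ z ∈ ball (0:ℂ) 1,
      c m z = ((s z : ℝ) : ℂ) ^ (-m) * G m (z, ((s z : ℝ) : ℂ)) := by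
    intro m z hz
    have hz1 : ‖z‖ ≤ 1 := le_of_lt (mem_ball_zero_iff.mp hz)
    rw [hc m z hz]
    congr 2
    apply intervalIntegral.integral_congr
    intro θ _
    simp only
    rw [hFf _ (honS z hz1 θ)]
  have hsne : ∀ z ∈ ball (0:ℂ) 1, ((s z : ℝ) : ℂ) ≠ 0 := by
    intro z hz
    have hz1 : ‖z‖ < 1 := mem_ball_zero_iff.mp hz
    have h1 : (0:ℝ) < 1 - ‖z‖^2 := by nlinarith [norm_nonneg z]
    simp only [hs, ne_eq, Complex.ofReal_eq_zero]
    positivity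
  refine ⟨?_, ?_, ?_⟩
  · -- continuity of c m on the ball
    intro m
    apply ContinuousOn.congr (f := fun z => ((s z : ℝ) : ℂ) ^ (-m) * G m (z, ((s z : ℝ) : ℂ)))
    · apply ContinuousOn.mul
      · intro z hz
        exact (hscont.continuousAt.zpow₀ _ (Or.inl (hsne z hz))).continuousWithinAt
      · exact ((hGcont m).comp (continuous_id.prodMk hscont)).continuousOn
    · intro z hz
      exact hcG m z hz
  · -- the boundary extension for m < 0
    intro m hm
    refine ⟨fun z => ((s z : ℝ) : ℂ) ^ ((-2*m).toNat) * G m (z, ((s z : ℝ) : ℂ)), ?_, ?_, ?_⟩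
    · exact ((hscont.pow _).mul ((hGcont m).comp
        (continuous_id.prodMk hscont))).continuousOn
    · intro z hz
      show ((s z : ℝ) : ℂ) ^ ((-2*m).toNat) * G m (z, ((s z : ℝ) : ℂ)) =
        ((s z : ℝ) : ℂ) ^ (-m) * c m z
      rw [hcG m z hz, ← mul_assoc]
      congr 1
      rw [← zpow_natCast (((s z : ℝ) : ℂ)), Int.toNat_of_nonneg (by omega : (0:ℤ) ≤ -2*m),
        ← zpow_add₀ (hsne z hz)]
      congr 1
      ring
    · intro z hz
      have hz1 : ‖z‖ = 1 := mem_sphere_zero_iff_norm.mp hz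
      have h0 : s z = 0 := by simp only [hs]; rw [hz1]; norm_num
      show ((s z : ℝ) : ℂ) ^ ((-2*m).toNat) * G m (z, ((s z : ℝ) : ℂ)) = 0
      rw [h0]
      simp only [Complex.ofReal_zero]
      rw [zero_pow (by omega : (-2*m).toNat ≠ 0), zero_mul]
  · -- the Fourier term extends to the sphere
    intro m
    refine ⟨G m, (hGcont m).continuousOn, ?_⟩
    intro z w hzw hw
    have hwn : (0:ℝ) < ‖w‖ := norm_pos_iff.mpr hw
    have hz1 : ‖z‖ < 1 := by nlinarith [norm_nonneg z]
    have hzball : z ∈ ball (0:ℂ) 1 := mem_ball_zero_iff.mpr hz1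
    have hsw : s z = ‖w‖ := by
      simp only [hs]
      rw [show 1 - ‖z‖^2 = ‖w‖^2 by linarith, Real.sqrt_sq (norm_nonneg w)]
    have habs : (‖w‖ : ℝ) = ‖w‖ := rfl
    have hG2 : G m (z, w) = Complex.exp ((m : ℂ) * (Complex.arg w : ℂ) * Complex.I) *
        G m (z, ((s z : ℝ) : ℂ)) := by
      simp only [hG]
      rw [stmt19_rot F m z w, hsw, habs, Complex.real_smul, Complex.real_smul]
      ring
    rw [hG2, hcG m z hzball, hsw]
    have hwm : w ^ m = ((‖w‖ : ℝ) : ℂ) ^ m *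
        Complex.exp ((m : ℂ) * (Complex.arg w : ℂ) * Complex.I) := by
      conv_lhs => rw [← Complex.norm_mul_exp_arg_mul_I w]
      rw [mul_zpow, habs]
      congr 1
      rw [← Complex.exp_int_mul]
      congr 1
      push_cast; ring
    rw [hwm]
    have hcancel : ((‖w‖ : ℝ) : ℂ) ^ m * ((‖w‖ : ℝ) : ℂ) ^ (-m) = 1 := by
      rw [← zpow_add₀ (Complex.ofReal_ne_zero.mpr (ne_of_gt hwn)),
        add_neg_cancel, zpow_zero]
    calc Complex.exp ((m : ℂ) * (Complex.arg w : ℂ) * Complex.I) *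
          G m (z, ((‖w‖ : ℝ) : ℂ))
        = (((‖w‖ : ℝ) : ℂ) ^ m * ((‖w‖ : ℝ) : ℂ) ^ (-m)) *
          (Complex.exp ((m : ℂ) * (Complex.arg w : ℂ) * Complex.I) *
            G m (z, ((‖w‖ : ℝ) : ℂ))) := by rw [hcancel, one_mul]
      _ = ((‖w‖ : ℝ) : ℂ) ^ m * Complex.exp ((m : ℂ) * (Complex.arg w : ℂ) * Complex.I) *
          (((‖w‖ : ℝ) : ℂ) ^ (-m) * G m (z, ((‖w‖ : ℝ) : ℂ))) := by ring
end
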